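/- arXiv:1807.10379 — 6 statements merged into one kernel-verified Lean document; each statement's English description precedes it below -/
import Mathlib

section
/- Let h and δh be Hermitian operators on a finite-dimensional complex inner product space, with δh positive semi-definite with operator norm ‖δh‖, and suppose h has ground energy e₀ with ground space S₀ and first excited energy e₁ > e₀. Then every eigenvalue of h + δh is at least min over unit vectors ψ₀ ∈ S₀ of e₀ + (e₁−e₀)⟨ψ₀, δh ψ₀⟩ / ((e₁−e₀) + ⟨ψ₀, δh ψ₀⟩ + ‖δh‖). -/
open scoped InnerProductSpace

lemma psd_cs {n : ℕ} (B : EuclideanSpace ℂ (Fin n) →L[ℂ] EuclideanSpace ℂ (Fin n))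
    (hB : IsSelfAdjoint B) (hpos : ∀ x, 0 ≤ (⟪x, B x⟫_ℂ).re)
    (x y : EuclideanSpace ℂ (Fin n)) :
    (⟪x, B y⟫_ℂ).re ^ 2 ≤ (⟪x, B x⟫_ℂ).re * (⟪y, B y⟫_ℂ).re := by
  have hsymm : ⟪y, B x⟫_ℂ = (starRingEnd ℂ) ⟪x, B y⟫_ℂ := by
    have h1 := hB.isSymmetric y x
    have h2 := inner_conj_symm (𝕜 := ℂ) x (B y)
    simp only [ContinuousLinearMap.coe_coe] at h1
    rw [← h1, ← h2, Complex.conj_conj]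
  have key : ∀ s : ℝ, 0 ≤ (⟪y, B y⟫_ℂ).re * (s * s) + (2 * (⟪x, B y⟫_ℂ).re) * s
      + (⟪x, B x⟫_ℂ).re := by
    intro s
    have h0 := hpos (x + (s : ℂ) • y)
    have e : ⟪x + (s:ℂ)•y, B (x + (s:ℂ)•y)⟫_ℂ
        = ⟪x, B x⟫_ℂ + (s:ℂ) * ⟪x, B y⟫_ℂ + (s:ℂ) * ⟪y, B x⟫_ℂ
          + (s:ℂ) * (s:ℂ) * ⟪y, B y⟫_ℂ := by
      rw [map_add, map_smul]
      rw [inner_add_left, inner_add_right, inner_add_right, inner_smul_left,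
        inner_smul_right, inner_smul_left, inner_smul_right]
      rw [Complex.conj_ofReal]
      ring
    rw [e] at h0
    rw [hsymm] at h0
    simp only [Complex.add_re, Complex.mul_re, Complex.ofReal_re, Complex.ofReal_im,
      Complex.conj_re, Complex.conj_im, Complex.mul_im] at h0
    nlinarith [h0]
  have := discrim_le_zero key
  rw [discrim] at this
  nlinarith [this]

lemma spec_gap {n : ℕ} (h : EuclideanSpace ℂ (Fin n) →L[ℂ] EuclideanSpace ℂ (Fin n))
    (hh : IsSelfAdjoint h) (e₀ e₁ : ℝ)
    (hfirst : ∀ μ : ℝ,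
      Module.End.HasEigenvalue (h : EuclideanSpace ℂ (Fin n) →ₗ[ℂ] EuclideanSpace ℂ (Fin n)) (μ : ℂ) →
      μ ≠ e₀ → e₁ ≤ μ)
    (w : EuclideanSpace ℂ (Fin n))
    (hw : w ∈ (Module.End.eigenspace
        (h : EuclideanSpace ℂ (Fin n) →ₗ[ℂ] EuclideanSpace ℂ (Fin n)) (e₀ : ℂ))ᗮ) :
    e₁ * ‖w‖ ^ 2 ≤ (⟪w, h w⟫_ℂ).re := by
  have hn : Module.finrank ℂ (EuclideanSpace ℂ (Fin n)) = n := finrank_euclideanSpace_fin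
  have hsym := hh.isSymmetric
  set b := hsym.eigenvectorBasis hn with hb
  set ev := hsym.eigenvalues hn with hev
  have hrep : ∀ x : EuclideanSpace ℂ (Fin n), ⟪w, x⟫_ℂ = ∑ i, (starRingEnd ℂ) (b.repr w i) * (b.repr x i) := by
    intro x
    rw [← b.repr.inner_map_map w x]
    rw [PiLp.inner_apply]; simp only [RCLike.inner_apply']
  have h1 : (⟪w, h w⟫_ℂ).re = ∑ i, ev i * Complex.normSq (b.repr w i) := by
    rw [hrep (h w)]
    rw [Complex.re_sum]
    congr 1; ext i
    have := hsym.eigenvectorBasis_apply_self_apply hn w i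
    rw [show b.repr (h w) i = (ev i : ℂ) * b.repr w i from this]
    rw [show (starRingEnd ℂ) (b.repr w i) * ((ev i : ℂ) * b.repr w i)
        = (ev i : ℂ) * ((starRingEnd ℂ) (b.repr w i) * b.repr w i) by ring,
      Complex.normSq_eq_conj_mul_self.symm]
    simp [Complex.ofReal_re, Complex.mul_re]
  have h2 : ‖w‖ ^ 2 = ∑ i, Complex.normSq (b.repr w i) := by
    have := hrep w
    have h3 : (⟪w, w⟫_ℂ).re = ‖w‖ ^ 2 := by
      rw [inner_self_eq_norm_sq_to_K (𝕜 := ℂ) w]; norm_cast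
    rw [← h3, this, Complex.re_sum]
    congr 1; ext i
    rw [Complex.normSq_eq_conj_mul_self.symm]
    simp
  rw [h1, h2, Finset.mul_sum]
  apply Finset.sum_le_sum
  intro i _
  by_cases hc : ev i = e₀
  · have hmem : b i ∈ Module.End.eigenspace
        (h : EuclideanSpace ℂ (Fin n) →ₗ[ℂ] EuclideanSpace ℂ (Fin n)) (e₀ : ℂ) := by
      rw [Module.End.mem_eigenspace_iff]
      have := hsym.apply_eigenvectorBasis hn i
      rw [← hc]
      exact this
    have : b.repr w i = 0 := by
      rw [b.repr_apply_apply]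
      exact (Submodule.mem_orthogonal _ w).mp hw _ hmem
    simp [this]
  · have := hfirst (ev i) (hsym.hasEigenvalue_eigenvalues hn i) hc
    have hns : 0 ≤ Complex.normSq (b.repr w i) := Complex.normSq_nonneg _
    nlinarith

lemma final_ineq (Δ D m d t a b : ℝ) (hΔ : 0 < Δ) (hD : 0 ≤ D) (hm : 0 ≤ m)
    (hd : 0 ≤ d) (ht : 0 ≤ t) (ha : 0 < a)
    (I2 : Δ*b^2 + a^2*(m-d) + t ≤ m*b^2) (I3 : a^2*(m-d)^2 ≤ d*t) (I4 : t ≤ D*b^2) :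
    Δ*d ≤ m*(Δ+d+D) := by
  by_contra hcon
  push_neg at hcon
  have hmd : m < d := by nlinarith
  have c1 : d*(Δ-m)*b^2 ≤ a^2*(d-m)*m := by
    nlinarith [I3, mul_le_mul_of_nonneg_left I2 hd]
  have c3 : a^2*(d-m)^2 ≤ d*D*b^2 := by
    nlinarith [I3, mul_le_mul_of_nonneg_left I4 hd]
  have c4 : d*b^2*((Δ-m)*(d-m) - D*m) ≤ 0 := by
    nlinarith [mul_le_mul_of_nonneg_right c1 (le_of_lt (sub_pos.2 hmd)),
      mul_le_mul_of_nonneg_right c3 hm]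
  have hpos : 0 < (Δ-m)*(d-m) - D*m := by nlinarith [sq_nonneg m]
  have hdb : d*b^2 = 0 := by
    rcases lt_or_ge 0 (d*b^2) with hp | hp
    · nlinarith [mul_pos hp hpos]
    · exact le_antisymm hp (mul_nonneg hd (sq_nonneg b))
  rcases mul_eq_zero.mp hdb with h0 | h0
  · nlinarith
  · nlinarith [c3, mul_pos (mul_pos ha ha) (mul_pos (sub_pos.2 hmd) (sub_pos.2 hmd))]


/-- **Eigenvalue bound for a sum of Hamiltonians.**
Let `h` and `δh` be self-adjoint operators on a finite-dimensional complex Hilbert space,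
with `δh` positive semi-definite, `h - e₀` positive semi-definite, `e₀` an eigenvalue of `h`
with eigenspace `S₀`, and `e₁ > e₀` the first excited energy (every eigenvalue other than
`e₀` is at least `e₁`).  Then every eigenvalue `μ` of `h + δh` is at least the minimum over
unit vectors `ψ₀ ∈ S₀` of
`e₀ + (e₁ - e₀)⟨ψ₀, δh ψ₀⟩ / ((e₁ - e₀) + ⟨ψ₀, δh ψ₀⟩ + ‖δh‖)`,
expressed here as: for every eigenvalue `μ` there exists a unit vector `ψ₀ ∈ S₀`
achieving the bound. -/
theorem eigenvalue_bound_sum_of_hamiltonians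
    {n : ℕ} (h δh : EuclideanSpace ℂ (Fin n) →L[ℂ] EuclideanSpace ℂ (Fin n))
    (hh : IsSelfAdjoint h) (hδh : IsSelfAdjoint δh)
    (hδhpos : ∀ x, 0 ≤ (⟪x, δh x⟫_ℂ).re)
    (e₀ e₁ : ℝ)
    (he₀ : Module.End.HasEigenvalue (h : EuclideanSpace ℂ (Fin n) →ₗ[ℂ] EuclideanSpace ℂ (Fin n)) (e₀ : ℂ))
    (hPSD : ∀ x, e₀ * ‖x‖ ^ 2 ≤ (⟪x, h x⟫_ℂ).re)
    (hgap : e₀ < e₁)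
    (he₁ : Module.End.HasEigenvalue (h : EuclideanSpace ℂ (Fin n) →ₗ[ℂ] EuclideanSpace ℂ (Fin n)) (e₁ : ℂ))
    (hfirst : ∀ μ : ℝ,
      Module.End.HasEigenvalue (h : EuclideanSpace ℂ (Fin n) →ₗ[ℂ] EuclideanSpace ℂ (Fin n)) (μ : ℂ) →
      μ ≠ e₀ → e₁ ≤ μ) :
    ∀ μ : ℝ,
      Module.End.HasEigenvalue
        ((h + δh : EuclideanSpace ℂ (Fin n) →L[ℂ] EuclideanSpace ℂ (Fin n)) :
          EuclideanSpace ℂ (Fin n) →ₗ[ℂ] EuclideanSpace ℂ (Fin n)) (μ : ℂ) →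
      ∃ ψ₀ ∈ Module.End.eigenspace
          (h : EuclideanSpace ℂ (Fin n) →ₗ[ℂ] EuclideanSpace ℂ (Fin n)) (e₀ : ℂ),
        ‖ψ₀‖ = 1 ∧
        e₀ + (e₁ - e₀) * (⟪ψ₀, δh ψ₀⟫_ℂ).re /
          ((e₁ - e₀) + (⟪ψ₀, δh ψ₀⟫_ℂ).re + ‖δh‖) ≤ μ := by
  intro μ hμ
  set S₀ := Module.End.eigenspace
      (h : EuclideanSpace ℂ (Fin n) →ₗ[ℂ] EuclideanSpace ℂ (Fin n)) (e₀ : ℂ) with hS₀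
  set D := ‖δh‖ with hD
  have hD0 : 0 ≤ D := norm_nonneg _
  have hΔ : 0 < e₁ - e₀ := by linarith
  -- real-valuedness of δh quadratic form
  have hreal : ∀ x, ⟪x, δh x⟫_ℂ = ((⟪x, δh x⟫_ℂ).re : ℂ) := by
    intro x
    have h1 := hδh.isSymmetric x x
    simp only [ContinuousLinearMap.coe_coe] at h1
    have h2 : (starRingEnd ℂ) ⟪x, δh x⟫_ℂ = ⟪x, δh x⟫_ℂ :=
      (inner_conj_symm (δh x) x).trans h1
    exact (Complex.conj_eq_iff_re.mp h2).symm
  -- the unit eigenvector v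
  obtain ⟨v', hv'⟩ := hμ.exists_hasEigenvector
  set v : EuclideanSpace ℂ (Fin n) := ((‖v'‖⁻¹ : ℝ) : ℂ) • v' with hvdef
  have hv1 : ‖v‖ = 1 := by
    have : ‖v'‖ ≠ 0 := norm_ne_zero_iff.mpr hv'.2
    simp [hvdef, norm_smul, inv_mul_cancel₀ this]
  have hveq : h v + δh v = (μ : ℂ) • v := by
    have hm : v ∈ Module.End.eigenspace
        ((h + δh : EuclideanSpace ℂ (Fin n) →L[ℂ] EuclideanSpace ℂ (Fin n)) :
          EuclideanSpace ℂ (Fin n) →ₗ[ℂ] EuclideanSpace ℂ (Fin n)) (μ : ℂ) :=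
      Submodule.smul_mem _ _ hv'.1
    rw [Module.End.mem_eigenspace_iff] at hm
    simpa using hm
  have hμval : (⟪v, h v⟫_ℂ).re + (⟪v, δh v⟫_ℂ).re = μ := by
    have : ⟪v, h v + δh v⟫_ℂ = (μ : ℂ) := by
      rw [hveq, inner_smul_right, inner_self_eq_norm_sq_to_K, hv1]
      norm_num
    rw [inner_add_right] at this
    have := congrArg Complex.re this
    simpa using this
  have hm0 : e₀ ≤ μ := by
    have h1 := hPSD v
    have h2 := hδhpos v
    rw [hv1] at h1
    nlinarith
  -- fallback: any unit vector in S₀ works when e₁ ≤ μ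
  have fallback : e₁ ≤ μ → ∃ ψ₀ ∈ S₀, ‖ψ₀‖ = 1 ∧
      e₀ + (e₁ - e₀) * (⟪ψ₀, δh ψ₀⟫_ℂ).re /
        ((e₁ - e₀) + (⟪ψ₀, δh ψ₀⟫_ℂ).re + D) ≤ μ := by
    intro hle
    obtain ⟨z, hz⟩ := he₀.exists_hasEigenvector
    have hznz : ‖z‖ ≠ 0 := norm_ne_zero_iff.mpr hz.2
    refine ⟨((‖z‖⁻¹ : ℝ) : ℂ) • z, Submodule.smul_mem _ _ hz.1, ?_, ?_⟩
    · simp [norm_smul, inv_mul_cancel₀ hznz]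
    · set d := (⟪((‖z‖⁻¹ : ℝ) : ℂ) • z, δh (((‖z‖⁻¹ : ℝ) : ℂ) • z)⟫_ℂ).re with hd
      have hd0 : 0 ≤ d := hδhpos _
      have hT : 0 < (e₁ - e₀) + d + D := by linarith
      have : (e₁ - e₀) * d / ((e₁ - e₀) + d + D) ≤ e₁ - e₀ := by
        rw [div_le_iff₀ hT]; nlinarith
      linarith
  by_cases hcase : e₁ ≤ μ
  · exact fallback hcase
  push_neg at hcase
  -- main case : μ < e₁
  set P := S₀.orthogonalProjection with hP
  set u : EuclideanSpace ℂ (Fin n) := (P v : EuclideanSpace ℂ (Fin n)) with hu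
  set w : EuclideanSpace ℂ (Fin n) := v - u with hwdef
  have hu_mem : u ∈ S₀ := (P v).2
  have hw_mem : w ∈ S₀ᗮ := Submodule.sub_starProjection_mem_orthogonal (K := S₀) v
  have hvuw : v = u + w := by simp [hwdef]
  have hunz : u ≠ 0 := by
    intro h0
    have hwv : w = v := by simp [hwdef, h0]
    have hvS : v ∈ S₀ᗮ := by rw [← hwv]; exact hw_mem
    have hsg := spec_gap h hh e₀ e₁ hfirst v (by rwa [hS₀] at hvS)
    rw [hv1, one_pow, mul_one] at hsg
    linarith [hδhpos v, hμval, hcase]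
  set α := ‖u‖ with hα
  have hα0 : 0 < α := norm_pos_iff.mpr hunz
  set ψ₀ : EuclideanSpace ℂ (Fin n) := ((α⁻¹ : ℝ) : ℂ) • u with hψ₀
  have hψ₀_mem : ψ₀ ∈ S₀ := Submodule.smul_mem _ _ hu_mem
  have hψ₀1 : ‖ψ₀‖ = 1 := by
    rw [hψ₀, norm_smul]
    simp only [Complex.norm_real, norm_inv, Real.norm_eq_abs, abs_of_pos hα0]
    rw [← hα]
    exact inv_mul_cancel₀ (ne_of_gt hα0)
  have huψ : u = ((α : ℝ) : ℂ) • ψ₀ := by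
    rw [hψ₀, smul_smul]
    norm_cast
    rw [mul_inv_cancel₀ (ne_of_gt hα0)]
    simp
  set β := ‖w‖ with hβ
  have hβ0 : 0 ≤ β := norm_nonneg _
  set d := (⟪ψ₀, δh ψ₀⟫_ℂ).re with hd
  set t := (⟪w, δh w⟫_ℂ).re with ht
  have hd0 : 0 ≤ d := hδhpos _
  have ht0 : 0 ≤ t := hδhpos _
  -- orthogonality facts
  have how : ∀ z ∈ S₀, ⟪z, w⟫_ℂ = 0 := fun z hz => (Submodule.mem_orthogonal _ w).mp hw_mem z hz
  have hoψw : ⟪ψ₀, w⟫_ℂ = 0 := how ψ₀ hψ₀_mem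
  have howψ : ⟪w, ψ₀⟫_ℂ = 0 := by
    rw [← inner_conj_symm, hoψw, map_zero]
  -- Pythagoras
  have hpyth : α ^ 2 + β ^ 2 = 1 := by
    have := norm_add_sq (𝕜 := ℂ) u w
    rw [← hvuw, hv1] at this
    have houw : ⟪u, w⟫_ℂ = 0 := how u hu_mem
    rw [houw] at this
    simp at this
    rw [← hα, ← hβ] at this
    linarith
  -- eigenvector equation for ψ₀
  have hhψ₀ : h ψ₀ = (e₀ : ℂ) • ψ₀ := by
    have := hψ₀_mem
    rw [hS₀, Module.End.mem_eigenspace_iff] at this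
    simpa using this
  -- inner products with v
  have hψv : ⟪ψ₀, v⟫_ℂ = (α : ℂ) := by
    rw [hvuw, huψ, inner_add_right, inner_smul_right, hoψw,
      inner_self_eq_norm_sq_to_K, hψ₀1]
    norm_num
  have hwv : ⟪w, v⟫_ℂ = ((β ^ 2 : ℝ) : ℂ) := by
    rw [hvuw, huψ, inner_add_right, inner_smul_right, howψ,
      inner_self_eq_norm_sq_to_K, hβ]
    norm_num
  -- R1 : ⟪ψ₀, δh w⟫ = α (μ - e₀ - d)
  have hδhw : ⟪ψ₀, δh w⟫_ℂ = ((α * (μ - e₀ - d) : ℝ) : ℂ) := by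
    have h1 : ⟪ψ₀, h v + δh v⟫_ℂ = (μ : ℂ) * (α : ℂ) := by
      rw [hveq, inner_smul_right, hψv]
    have hψhv : ⟪ψ₀, h v⟫_ℂ = (e₀ : ℂ) * (α : ℂ) := by
      have hsym := hh.isSymmetric ψ₀ v
      simp only [ContinuousLinearMap.coe_coe] at hsym
      rw [← hsym, hhψ₀, inner_smul_left, hψv, Complex.conj_ofReal]
    have hψδv : ⟪ψ₀, δh v⟫_ℂ = (α : ℂ) * (d : ℂ) + ⟪ψ₀, δh w⟫_ℂ := by
      rw [hvuw, map_add, inner_add_right, huψ, map_smul, inner_smul_right, hd, ← hreal ψ₀]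
    rw [inner_add_right, hψhv, hψδv] at h1
    push_cast
    linear_combination h1
  -- R2 : component along w
  have hR2 : (⟪w, h w⟫_ℂ).re + α ^ 2 * (μ - e₀ - d) + t = μ * β ^ 2 := by
    have h1 : ⟪w, h v + δh v⟫_ℂ = (μ : ℂ) * ((β ^ 2 : ℝ) : ℂ) := by
      rw [hveq, inner_smul_right, hwv]
    have hwhv : ⟪w, h v⟫_ℂ = ⟪w, h w⟫_ℂ := by
      rw [hvuw, map_add, inner_add_right, huψ, map_smul, hhψ₀, smul_smul, inner_smul_right, howψ]
      ring
    have hwδψ : ⟪w, δh ψ₀⟫_ℂ = ((α * (μ - e₀ - d) : ℝ) : ℂ) := by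
      have hsym := hδh.isSymmetric w ψ₀
      simp only [ContinuousLinearMap.coe_coe] at hsym
      have hc : ⟪w, δh ψ₀⟫_ℂ = (starRingEnd ℂ) ⟪ψ₀, δh w⟫_ℂ := by
        rw [← hsym]
        exact (inner_conj_symm (δh w) ψ₀).symm
      rw [hc, hδhw, Complex.conj_ofReal]
    have hwδv : ⟪w, δh v⟫_ℂ = ((α ^ 2 * (μ - e₀ - d) : ℝ) : ℂ) + ⟪w, δh w⟫_ℂ := by
      rw [hvuw, map_add, inner_add_right, huψ, map_smul, inner_smul_right, hwδψ]
      push_cast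
      ring
    rw [inner_add_right, hwhv, hwδv] at h1
    have := congrArg Complex.re h1
    simp only [Complex.add_re, Complex.ofReal_re, Complex.mul_re, Complex.ofReal_im,
      mul_zero, zero_mul, sub_zero] at this
    rw [← ht] at this
    linarith [this]
  -- assemble the inequalities
  have hsgw := spec_gap h hh e₀ e₁ hfirst w (by rwa [hS₀] at hw_mem)
  have I2 : (e₁ - e₀) * β ^ 2 + α ^ 2 * ((μ - e₀) - d) + t ≤ (μ - e₀) * β ^ 2 := by
    rw [← hβ] at hsgw
    linarith [hsgw, hR2]
  have I3 : α ^ 2 * ((μ - e₀) - d) ^ 2 ≤ d * t := by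
    have hcs := psd_cs δh hδh hδhpos ψ₀ w
    rw [hδhw] at hcs
    simp only [Complex.ofReal_re] at hcs
    rw [← hd, ← ht] at hcs
    calc α ^ 2 * ((μ - e₀) - d) ^ 2 = (α * (μ - e₀ - d)) ^ 2 := by ring
    _ ≤ d * t := hcs
  have I4 : t ≤ D * β ^ 2 := by
    have h1 : t ≤ ‖⟪w, δh w⟫_ℂ‖ := by
      rw [ht]
      exact Complex.re_le_norm _
    have h2 := norm_inner_le_norm (𝕜 := ℂ) w (δh w)
    have h3 := δh.le_opNorm w
    have h4 : ‖w‖ * ‖δh w‖ ≤ ‖w‖ * (‖δh‖ * ‖w‖) :=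
      mul_le_mul_of_nonneg_left h3 (norm_nonneg w)
    have h5 : ‖w‖ * (‖δh‖ * ‖w‖) = D * β ^ 2 := by rw [← hβ, ← hD]; ring
    linarith
  have key : (e₁ - e₀) * d ≤ (μ - e₀) * ((e₁ - e₀) + d + D) :=
    final_ineq (e₁ - e₀) D (μ - e₀) d t α β hΔ hD0 (by linarith) hd0 ht0 hα0 I2 I3 I4
  refine ⟨ψ₀, hψ₀_mem, hψ₀1, ?_⟩
  have hT : 0 < (e₁ - e₀) + d + D := by linarith
  have hdiv : (e₁ - e₀) * d / ((e₁ - e₀) + d + D) ≤ μ - e₀ := by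
    rw [div_le_iff₀ hT]
    exact key
  linarith [hdiv]
end

section
/- For the path graph on N₁ vertices (N₁ even, vertices 1,…,N₁ with edges between consecutive vertices), any real function φ orthogonal to constants (Σφ = 0, φ ≠ 0) satisfies the Rayleigh quotient bound Σ_{k=1}^{N₁−1} |φ(k)−φ(k+1)|² / Σ_{k=1}^{N₁} |φ(k)|² ≥ 2/(2N₁+1)². -/
open scoped Classical BigOperators

/-- Rayleigh numerator of the graph Laplacian: `∑_{i∼i'} (f i - f i')²`. -/
noncomputable def lapNum {V : Type*} [Fintype V] (G : SimpleGraph V) (f : V → ℝ) : ℝ :=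
  (∑ i, ∑ j, if G.Adj i j then (f i - f j) ^ 2 else 0) / 2

/-- **Example 1: 1-dimensional chain.**  For the path graph on `N₁` vertices (`N₁` even),
any nonzero mean-zero real function `φ` satisfies the Rayleigh quotient bound
`E_φ ≥ 2 / (2N₁ + 1)²`. -/
theorem path_graph_rayleigh_bound (N₁ : ℕ) (hN : Even N₁)
    (φ : Fin N₁ → ℝ) (hφ0 : ∑ k, φ k = 0) (hφne : φ ≠ 0) :
    2 / ((2 * (N₁ : ℝ) + 1) ^ 2) ≤
      lapNum (SimpleGraph.pathGraph N₁) φ / ∑ k, (φ k) ^ 2 := by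
  classical
  have hN1 : 0 < N₁ := by
    rcases Nat.eq_zero_or_pos N₁ with h | h
    · exfalso; apply hφne; funext k; exact absurd k.2 (by omega)
    · exact h
  -- extend φ to ℕ
  set ψ : ℕ → ℝ := fun n => if h : n < N₁ then φ ⟨n, h⟩ else 0 with hψdef
  have hψφ : ∀ i : Fin N₁, ψ i.val = φ i := by
    intro i; simp [hψdef, i.2]
  set S : ℝ := ∑ k ∈ Finset.range (N₁ - 1), (ψ (k + 1) - ψ k) ^ 2 with hSdef
  have hS0 : 0 ≤ S := Finset.sum_nonneg fun k _ => sq_nonneg _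
  -- Step A : lapNum = S
  have hT : ∀ i : Fin N₁,
      (∑ j, if (SimpleGraph.pathGraph N₁).Adj i j then (φ i - φ j) ^ 2 else 0)
        = ∑ j ∈ Finset.range N₁,
            if ((i : ℕ) + 1 = j ∨ j + 1 = (i : ℕ)) then (ψ (i : ℕ) - ψ j) ^ 2 else 0 := by
    intro i
    rw [← Fin.sum_univ_eq_sum_range
      (fun j => if ((i : ℕ) + 1 = j ∨ j + 1 = (i : ℕ)) then (ψ (i : ℕ) - ψ j) ^ 2 else 0)]
    apply Finset.sum_congr rfl
    intro j _
    rw [SimpleGraph.pathGraph_adj, hψφ i, hψφ j]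
    by_cases h : (i : ℕ) + 1 = (j : ℕ) ∨ (j : ℕ) + 1 = (i : ℕ) <;> simp [h]
  have hNum : (∑ i, ∑ j, if (SimpleGraph.pathGraph N₁).Adj i j then (φ i - φ j) ^ 2 else 0)
      = ∑ i ∈ Finset.range N₁, ∑ j ∈ Finset.range N₁,
          if (i + 1 = j ∨ j + 1 = i) then (ψ i - ψ j) ^ 2 else 0 := by
    rw [← Fin.sum_univ_eq_sum_range
      (fun i => ∑ j ∈ Finset.range N₁, if (i + 1 = j ∨ j + 1 = i) then (ψ i - ψ j) ^ 2 else 0)]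
    exact Finset.sum_congr rfl fun i _ => hT i
  have hsplit : ∀ i j : ℕ,
      (if (i + 1 = j ∨ j + 1 = i) then (ψ i - ψ j) ^ 2 else 0)
        = (if i + 1 = j then (ψ i - ψ j) ^ 2 else 0)
          + (if j + 1 = i then (ψ i - ψ j) ^ 2 else 0) := by
    intro i j
    by_cases h1 : i + 1 = j <;> by_cases h2 : j + 1 = i <;> simp [h1, h2] <;> omega
  have hA1 : (∑ i ∈ Finset.range N₁, ∑ j ∈ Finset.range N₁,
      if i + 1 = j then (ψ i - ψ j) ^ 2 else 0) = S := by
    have hinner : ∀ i ∈ Finset.range N₁,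
        (∑ j ∈ Finset.range N₁, if i + 1 = j then (ψ i - ψ j) ^ 2 else 0)
          = if i + 1 < N₁ then (ψ i - ψ (i + 1)) ^ 2 else 0 := by
      intro i _
      rw [Finset.sum_ite_eq (Finset.range N₁) (i + 1) (fun j => (ψ i - ψ j) ^ 2)]
      simp [Finset.mem_range]
    rw [Finset.sum_congr rfl hinner]
    rw [← Finset.sum_filter]
    have hfil : (Finset.range N₁).filter (fun i => i + 1 < N₁) = Finset.range (N₁ - 1) := by
      ext k; simp [Finset.mem_filter, Finset.mem_range]; omega
    rw [hfil, hSdef]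
    exact Finset.sum_congr rfl fun k _ => by ring
  have hlap : lapNum (SimpleGraph.pathGraph N₁) φ = S := by
    unfold lapNum
    rw [hNum]
    have : (∑ i ∈ Finset.range N₁, ∑ j ∈ Finset.range N₁,
        if (i + 1 = j ∨ j + 1 = i) then (ψ i - ψ j) ^ 2 else 0) = S + S := by
      calc (∑ i ∈ Finset.range N₁, ∑ j ∈ Finset.range N₁,
            if (i + 1 = j ∨ j + 1 = i) then (ψ i - ψ j) ^ 2 else 0)
          = (∑ i ∈ Finset.range N₁, ∑ j ∈ Finset.range N₁,
              ((if i + 1 = j then (ψ i - ψ j) ^ 2 else 0)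
                + (if j + 1 = i then (ψ i - ψ j) ^ 2 else 0))) := by
            exact Finset.sum_congr rfl fun i _ => Finset.sum_congr rfl fun j _ => hsplit i j
        _ = (∑ i ∈ Finset.range N₁, ∑ j ∈ Finset.range N₁,
              (if i + 1 = j then (ψ i - ψ j) ^ 2 else 0))
            + (∑ i ∈ Finset.range N₁, ∑ j ∈ Finset.range N₁,
              (if j + 1 = i then (ψ i - ψ j) ^ 2 else 0)) := by
            rw [← Finset.sum_add_distrib]
            exact Finset.sum_congr rfl fun i _ => Finset.sum_add_distrib
        _ = S + S := by
            have hsym : (∑ i ∈ Finset.range N₁, ∑ j ∈ Finset.range N₁,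
                if j + 1 = i then (ψ i - ψ j) ^ 2 else 0)
                  = ∑ i ∈ Finset.range N₁, ∑ j ∈ Finset.range N₁,
                if j + 1 = i then (ψ j - ψ i) ^ 2 else 0 := by
              refine Finset.sum_congr rfl fun i _ => Finset.sum_congr rfl fun j _ => ?_
              by_cases h : j + 1 = i <;> simp [h]
              ring
            have hA2 : (∑ i ∈ Finset.range N₁, ∑ j ∈ Finset.range N₁,
                if j + 1 = i then (ψ i - ψ j) ^ 2 else 0) = S := by
              rw [hsym, Finset.sum_comm]; exact hA1
            rw [hA1, hA2]
    rw [this]; ring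
  -- Step B : telescoping + Cauchy–Schwarz
  have hB : ∀ a b : ℕ, a ≤ b → b < N₁ → (ψ b - ψ a) ^ 2 ≤ (N₁ : ℝ) * S := by
    intro a b hab hb
    have tel : ψ b - ψ a = ∑ k ∈ Finset.Ico a b, (ψ (k + 1) - ψ k) := by
      rw [Finset.sum_Ico_eq_sub _ hab, Finset.sum_range_sub (f := ψ),
        Finset.sum_range_sub (f := ψ)]
      ring
    rw [tel]
    calc (∑ k ∈ Finset.Ico a b, (ψ (k + 1) - ψ k)) ^ 2
        ≤ (Finset.Ico a b).card * ∑ k ∈ Finset.Ico a b, (ψ (k + 1) - ψ k) ^ 2 :=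
          sq_sum_le_card_mul_sum_sq
      _ ≤ (N₁ : ℝ) * S := by
          apply mul_le_mul
          · rw [Nat.card_Ico]; exact_mod_cast Nat.le_of_lt (by omega : b - a < N₁)
          · apply Finset.sum_le_sum_of_subset_of_nonneg
            · intro k hk
              simp only [Finset.mem_Ico, Finset.mem_range] at hk ⊢
              omega
            · intro k _ _; exact sq_nonneg _
          · exact Finset.sum_nonneg fun k _ => sq_nonneg _
          · positivity
  -- max and min
  have hne : (Finset.univ : Finset (Fin N₁)).Nonempty := ⟨⟨0, hN1⟩, Finset.mem_univ _⟩
  obtain ⟨a, -, ha⟩ := Finset.exists_max_image Finset.univ φ hne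
  obtain ⟨b, -, hb⟩ := Finset.exists_min_image Finset.univ φ hne
  have ha' : ∀ k, φ k ≤ φ a := fun k => ha k (Finset.mem_univ k)
  have hb' : ∀ k, φ b ≤ φ k := fun k => hb k (Finset.mem_univ k)
  have hamax : 0 ≤ φ a := by
    by_contra h
    push_neg at h
    have : ∑ k, φ k < 0 := by
      have : ∑ k, φ k ≤ ∑ _k : Fin N₁, φ a := Finset.sum_le_sum fun k _ => ha' k
      simp only [Finset.sum_const, Finset.card_univ, Fintype.card_fin, nsmul_eq_mul] at this
      have : ∑ k, φ k ≤ (N₁ : ℝ) * φ a := this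
      nlinarith [(by exact_mod_cast hN1 : (1:ℝ) ≤ (N₁:ℝ))]
    linarith [hφ0 ▸ this]
  have hbmin : φ b ≤ 0 := by
    by_contra h
    push_neg at h
    have : (0 : ℝ) < ∑ k, φ k := by
      have h1 : ∑ _k : Fin N₁, φ b ≤ ∑ k, φ k := Finset.sum_le_sum fun k _ => hb' k
      simp only [Finset.sum_const, Finset.card_univ, Fintype.card_fin, nsmul_eq_mul] at h1
      nlinarith [(by exact_mod_cast hN1 : (1:ℝ) ≤ (N₁:ℝ))]
    linarith [hφ0 ▸ this]
  -- key : (φ a - φ b)^2 ≤ N₁ * S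
  have hkey : (φ a - φ b) ^ 2 ≤ (N₁ : ℝ) * S := by
    rcases le_total (b : ℕ) (a : ℕ) with h | h
    · have := hB b a h a.2
      rwa [hψφ a, hψφ b] at this
    · have := hB a b h b.2
      rw [hψφ a, hψφ b] at this
      calc (φ a - φ b) ^ 2 = (φ b - φ a) ^ 2 := by ring
        _ ≤ (N₁ : ℝ) * S := this
  -- each |φ k| ≤ φ a - φ b
  have hterm : ∀ k, (φ k) ^ 2 ≤ (φ a - φ b) ^ 2 := by
    intro k
    apply sq_le_sq'
    · linarith [ha' k, hb' k]
    · linarith [ha' k, hb' k]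
  have hD : (∑ k, (φ k) ^ 2) ≤ (N₁ : ℝ) * ((φ a - φ b) ^ 2) := by
    calc (∑ k, (φ k) ^ 2) ≤ ∑ _k : Fin N₁, (φ a - φ b) ^ 2 :=
          Finset.sum_le_sum fun k _ => hterm k
      _ = (N₁ : ℝ) * ((φ a - φ b) ^ 2) := by
          simp [Finset.sum_const, Finset.card_univ, mul_comm]
  have hDpos : 0 < ∑ k, (φ k) ^ 2 := by
    obtain ⟨k, hk⟩ := Function.ne_iff.mp hφne
    have h1 : (φ k) ^ 2 ≤ ∑ k, (φ k) ^ 2 :=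
      Finset.single_le_sum (fun i _ => sq_nonneg (φ i)) (Finset.mem_univ k)
    have h2 : 0 < (φ k) ^ 2 :=
      lt_of_le_of_ne (sq_nonneg _) (Ne.symm (pow_ne_zero 2 hk))
    linarith
  rw [hlap, div_le_div_iff₀ (by positivity) hDpos]
  have hDle : (∑ k, (φ k) ^ 2) ≤ (N₁ : ℝ) * ((N₁ : ℝ) * S) := by
    calc (∑ k, (φ k) ^ 2) ≤ (N₁ : ℝ) * ((φ a - φ b) ^ 2) := hD
      _ ≤ (N₁ : ℝ) * ((N₁ : ℝ) * S) := by
          apply mul_le_mul_of_nonneg_left hkey (by positivity)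
  nlinarith [hS0, Nat.cast_nonneg (α := ℝ) N₁]
end

section
/- For the Cartesian product of two path graphs on N₁ and N₂ vertices (N₁, N₂ even), any real function φ with Σφ = 0 and φ ≠ 0 satisfies the Laplacian Rayleigh quotient bound E_φ ≥ 2/((2(N₁+N₂)+1)(2·max(N₁,N₂)+1)). -/
open scoped Classical BigOperators

/-- Telescoping + Cauchy–Schwarz bound on a 1-dimensional chain. -/
private lemma grid2_tele_sq (f : ℕ → ℝ) (L x y : ℕ) (hx : x ≤ L) (hy : y ≤ L) :
    (f x - f y)^2 ≤ (L : ℝ) * ∑ k ∈ Finset.range L, (f (k+1) - f k)^2 := by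
  have key : ∀ u v : ℕ, u ≤ v → v ≤ L →
      (f v - f u)^2 ≤ (L : ℝ) * ∑ k ∈ Finset.range L, (f (k+1) - f k)^2 := by
    intro u v huv hv
    have htel : f v - f u = ∑ k ∈ Finset.Ico u v, (f (k+1) - f k) := by
      rw [Finset.sum_Ico_eq_sub _ huv, Finset.sum_range_sub, Finset.sum_range_sub]
      ring
    rw [htel]
    calc (∑ k ∈ Finset.Ico u v, (f (k+1) - f k))^2
        ≤ (Finset.Ico u v).card * ∑ k ∈ Finset.Ico u v, (f (k+1) - f k)^2 :=
          sq_sum_le_card_mul_sum_sq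
      _ ≤ (L:ℝ) * ∑ k ∈ Finset.range L, (f (k+1) - f k)^2 := by
          apply mul_le_mul
          · rw [Nat.card_Ico]; exact_mod_cast Nat.le_trans (Nat.sub_le v u) hv
          · apply Finset.sum_le_sum_of_subset_of_nonneg
            · intro k hk
              simp only [Finset.mem_Ico, Finset.mem_range] at *
              omega
            · intro k _ _; positivity
          · positivity
          · positivity
  rcases le_total y x with h | h
  · exact key y x h hx
  · have := key x y h hy
    calc (f x - f y)^2 = (f y - f x)^2 := by ring
      _ ≤ _ := this

set_option maxHeartbeats 1000000 in
/-- **Example 2: 2-dimensional chain.**  For the Cartesian (box) product of two path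
graphs on `N₁` and `N₂` vertices (`N₁, N₂` even), any nonzero mean-zero real function `φ`
satisfies `E_φ ≥ 2 / ((2(N₁+N₂)+1)(2 max(N₁,N₂)+1))`. -/
theorem grid2_rayleigh_bound (N₁ N₂ : ℕ) (h₁ : Even N₁) (h₂ : Even N₂)
    (φ : Fin N₁ × Fin N₂ → ℝ) (hφ0 : ∑ i, φ i = 0) (hφne : φ ≠ 0) :
    2 / ((2 * ((N₁ : ℝ) + N₂) + 1) * (2 * (max N₁ N₂ : ℕ) + 1)) ≤
      lapNum ((SimpleGraph.pathGraph N₁).boxProd (SimpleGraph.pathGraph N₂)) φ /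
        ∑ i, (φ i) ^ 2 := by
  classical
  obtain ⟨r₁, hr₁⟩ := h₁
  obtain ⟨r₂, hr₂⟩ := h₂
  have hN₁ : 0 < N₁ := by
    by_contra h
    exact hφne (funext fun i => absurd i.1.2 (by omega))
  have hN₂ : 0 < N₂ := by
    by_contra h
    exact hφne (funext fun i => absurd i.2.2 (by omega))
  have hN₁2 : 2 ≤ N₁ := by omega
  have hN₂2 : 2 ≤ N₂ := by omega
  set G := (SimpleGraph.pathGraph N₁).boxProd (SimpleGraph.pathGraph N₂) with hGdef
  set A : ℝ := ∑ i, (φ i)^2 with hAdef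
  have hA : 0 < A := by
    obtain ⟨i, hi⟩ := Function.ne_iff.mp hφne
    exact Finset.sum_pos' (fun j _ => sq_nonneg _)
      ⟨i, Finset.mem_univ i, (Ne.symm (pow_ne_zero 2 hi)).lt_of_le (sq_nonneg _)⟩
  set g : ℕ → ℕ → ℝ := fun a b =>
    if h : a < N₁ ∧ b < N₂ then φ (⟨a, h.1⟩, ⟨b, h.2⟩) else 0 with hgdef
  have hg : ∀ (x : Fin N₁) (z : Fin N₂), g x.val z.val = φ (x, z) := by
    intro x z
    simp [hgdef, x.2, z.2]
  set R : ℕ → ℝ := fun b => ∑ a ∈ Finset.range (N₁-1), (g (a+1) b - g a b)^2 with hRdef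
  set C : ℕ → ℝ := fun a => ∑ b ∈ Finset.range (N₂-1), (g a (b+1) - g a b)^2 with hCdef
  set H : ℝ := ∑ b ∈ Finset.range N₂, R b with hHdef
  set V : ℝ := ∑ a ∈ Finset.range N₁, C a with hVdef
  have hR0 : ∀ b, 0 ≤ R b := fun b => Finset.sum_nonneg fun _ _ => sq_nonneg _
  have hC0 : ∀ a, 0 ≤ C a := fun a => Finset.sum_nonneg fun _ _ => sq_nonneg _
  have hH0 : 0 ≤ H := Finset.sum_nonneg fun b _ => hR0 b
  have hV0 : 0 ≤ V := Finset.sum_nonneg fun a _ => hC0 a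
  -- pointwise path bound
  have hpt : ∀ i j : Fin N₁ × Fin N₂, (φ i - φ j)^2 ≤
      2*((N₁-1 : ℕ):ℝ)*R i.2.val + 2*((N₂-1 : ℕ):ℝ)*C j.1.val := by
    intro i j
    have h1 : (g i.1.val i.2.val - g j.1.val i.2.val)^2 ≤
        ((N₁-1 : ℕ):ℝ) * R i.2.val := by
      exact grid2_tele_sq (fun a => g a i.2.val) (N₁-1) i.1.val j.1.val
        (by omega) (by have := j.1.2; omega)
    have h2 : (g j.1.val i.2.val - g j.1.val j.2.val)^2 ≤
        ((N₂-1 : ℕ):ℝ) * C j.1.val := by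
      exact grid2_tele_sq (fun b => g j.1.val b) (N₂-1) i.2.val j.2.val
        (by have := i.2.2; omega) (by have := j.2.2; omega)
    have e1 : φ i = g i.1.val i.2.val := (hg i.1 i.2).symm
    have e2 : φ j = g j.1.val j.2.val := (hg j.1 j.2).symm
    rw [e1, e2]
    nlinarith [sq_nonneg ((g i.1.val i.2.val - g j.1.val i.2.val) -
      (g j.1.val i.2.val - g j.1.val j.2.val))]
  -- mean-zero identity
  have hid : ∑ i, ∑ j, (φ i - φ j)^2 = 2 * ((N₁*N₂ : ℕ):ℝ) * A := by
    have cross : ∑ i : Fin N₁ × Fin N₂, ∑ j : Fin N₁ × Fin N₂, (φ i * φ j) = 0 := by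
      rw [← Finset.sum_mul_sum, hφ0, zero_mul]
    calc ∑ i, ∑ j, (φ i - φ j)^2
        = ∑ i, ∑ j, ((φ i^2 + φ j^2) - 2*(φ i * φ j)) := by
          refine Finset.sum_congr rfl fun i _ => Finset.sum_congr rfl fun j _ => by ring
      _ = (∑ i : Fin N₁ × Fin N₂, ∑ j : Fin N₁ × Fin N₂, (φ i^2 + φ j^2))
          - 2 * ∑ i : Fin N₁ × Fin N₂, ∑ j : Fin N₁ × Fin N₂, (φ i * φ j) := by
          simp only [Finset.sum_sub_distrib, ← Finset.mul_sum]
      _ = 2 * ((N₁*N₂ : ℕ):ℝ) * A := by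
          rw [cross, mul_zero, sub_zero]
          simp only [Finset.sum_add_distrib, Finset.sum_const, Finset.card_univ,
            Fintype.card_prod, Fintype.card_fin, nsmul_eq_mul, ← Finset.mul_sum, ← hAdef]
          push_cast
          ring
  -- summing the pointwise bound
  have hRsum : ∑ i : Fin N₁ × Fin N₂, R i.2.val = (N₁:ℝ) * H := by
    rw [Fintype.sum_prod_type]
    have e : ∀ x : Fin N₁, ∑ z : Fin N₂, R z.val = H :=
      fun x => (Fin.sum_univ_eq_sum_range R N₂).trans hHdef.symm
    rw [Finset.sum_congr rfl fun x _ => e x, Finset.sum_const, Finset.card_univ,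
      Fintype.card_fin, nsmul_eq_mul]
  have hCsum : ∑ j : Fin N₁ × Fin N₂, C j.1.val = (N₂:ℝ) * V := by
    rw [Fintype.sum_prod_type]
    have e : ∀ y : Fin N₁, ∑ w : Fin N₂, C y.val = (N₂:ℝ) * C y.val := by
      intro y
      rw [Finset.sum_const, Finset.card_univ, Fintype.card_fin, nsmul_eq_mul]
    rw [Finset.sum_congr rfl fun y _ => e y, ← Finset.mul_sum,
      Fin.sum_univ_eq_sum_range C N₁, ← hVdef]
  have hkey : ∀ (X Y : Fin N₁ × Fin N₂ → ℝ),
      ∑ i : Fin N₁ × Fin N₂, ∑ j : Fin N₁ × Fin N₂, (X i + Y j)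
        = ((N₁*N₂ : ℕ):ℝ) * (∑ i, X i) + ((N₁*N₂ : ℕ):ℝ) * (∑ j, Y j) := by
    intro X Y
    simp only [Finset.sum_add_distrib, Finset.sum_const, Finset.card_univ,
      Fintype.card_prod, Fintype.card_fin, nsmul_eq_mul, ← Finset.mul_sum]
  have hsum : 2 * ((N₁*N₂ : ℕ):ℝ) * A ≤
      2 * ((N₁*N₂ : ℕ):ℝ) * (((N₁-1 : ℕ):ℝ) * (N₁ * H) + ((N₂-1 : ℕ):ℝ) * (N₂ * V)) := by
    calc 2 * ((N₁*N₂ : ℕ):ℝ) * A = ∑ i, ∑ j, (φ i - φ j)^2 := hid.symm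
      _ ≤ ∑ i : Fin N₁ × Fin N₂, ∑ j : Fin N₁ × Fin N₂,
            (2*((N₁-1 : ℕ):ℝ)*R i.2.val + 2*((N₂-1 : ℕ):ℝ)*C j.1.val) :=
          Finset.sum_le_sum fun i _ => Finset.sum_le_sum fun j _ => hpt i j
      _ = ((N₁*N₂ : ℕ):ℝ) * (∑ i : Fin N₁ × Fin N₂, 2*((N₁-1 : ℕ):ℝ)*R i.2.val)
          + ((N₁*N₂ : ℕ):ℝ) * (∑ j : Fin N₁ × Fin N₂, 2*((N₂-1 : ℕ):ℝ)*C j.1.val) :=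
          hkey _ _
      _ = 2 * ((N₁*N₂ : ℕ):ℝ) * (((N₁-1 : ℕ):ℝ) * (N₁ * H) + ((N₂-1 : ℕ):ℝ) * (N₂ * V)) := by
          rw [← Finset.mul_sum, ← Finset.mul_sum, hRsum, hCsum]
          ring
  -- the Laplacian numerator dominates H + V
  have hAdjIff : ∀ i j : Fin N₁ × Fin N₂, G.Adj i j ↔
      ((((i.1:ℕ)+1 = j.1 ∨ (j.1:ℕ)+1 = i.1) ∧ (i.2:ℕ) = j.2) ∨
      (((i.2:ℕ)+1 = j.2 ∨ (j.2:ℕ)+1 = i.2) ∧ (i.1:ℕ) = j.1)) := by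
    intro i j
    rw [hGdef, SimpleGraph.boxProd_adj]
    simp only [SimpleGraph.pathGraph_adj, Fin.ext_iff]
  have hHeq : ∑ i : Fin N₁ × Fin N₂,
      (if (i.1:ℕ)+1 < N₁ then (g ((i.1:ℕ)+1) (i.2:ℕ) - g (i.1:ℕ) (i.2:ℕ))^2 else 0) = H := by
    rw [Fintype.sum_prod_type]
    have e1 : ∀ x : Fin N₁,
        (∑ z : Fin N₂, (if (x:ℕ)+1 < N₁ then (g ((x:ℕ)+1) (z:ℕ) - g (x:ℕ) (z:ℕ))^2 else 0))
        = ∑ b ∈ Finset.range N₂, (if (x:ℕ)+1 < N₁ then (g ((x:ℕ)+1) b - g (x:ℕ) b)^2 else 0) :=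
      fun x => Fin.sum_univ_eq_sum_range
        (fun b => if (x:ℕ)+1 < N₁ then (g ((x:ℕ)+1) b - g (x:ℕ) b)^2 else 0) N₂
    rw [Finset.sum_congr rfl fun x _ => e1 x,
      Fin.sum_univ_eq_sum_range
        (fun a => ∑ b ∈ Finset.range N₂, (if a+1 < N₁ then (g (a+1) b - g a b)^2 else 0)) N₁,
      Finset.sum_comm]
    refine Finset.sum_congr rfl fun b _ => ?_
    calc ∑ a ∈ Finset.range N₁, (if a+1 < N₁ then (g (a+1) b - g a b)^2 else 0)
        = ∑ a ∈ Finset.range (N₁-1), (if a+1 < N₁ then (g (a+1) b - g a b)^2 else 0) := by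
          refine (Finset.sum_subset (Finset.range_subset_range.mpr (by omega)) ?_).symm
          intro a ha hna
          simp only [Finset.mem_range] at ha hna
          rw [if_neg (by omega)]
      _ = R b := Finset.sum_congr rfl fun a ha =>
          if_pos (by simp only [Finset.mem_range] at ha; omega)
  have hVeq : ∑ i : Fin N₁ × Fin N₂,
      (if (i.2:ℕ)+1 < N₂ then (g (i.1:ℕ) ((i.2:ℕ)+1) - g (i.1:ℕ) (i.2:ℕ))^2 else 0) = V := by
    rw [Fintype.sum_prod_type]
    have e1 : ∀ x : Fin N₁,
        (∑ z : Fin N₂, (if (z:ℕ)+1 < N₂ then (g (x:ℕ) ((z:ℕ)+1) - g (x:ℕ) (z:ℕ))^2 else 0))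
        = ∑ b ∈ Finset.range N₂, (if b+1 < N₂ then (g (x:ℕ) (b+1) - g (x:ℕ) b)^2 else 0) :=
      fun x => Fin.sum_univ_eq_sum_range
        (fun b => if b+1 < N₂ then (g (x:ℕ) (b+1) - g (x:ℕ) b)^2 else 0) N₂
    rw [Finset.sum_congr rfl fun x _ => e1 x,
      Fin.sum_univ_eq_sum_range
        (fun a => ∑ b ∈ Finset.range N₂, (if b+1 < N₂ then (g a (b+1) - g a b)^2 else 0)) N₁]
    refine Finset.sum_congr rfl fun a _ => ?_
    calc ∑ b ∈ Finset.range N₂, (if b+1 < N₂ then (g a (b+1) - g a b)^2 else 0)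
        = ∑ b ∈ Finset.range (N₂-1), (if b+1 < N₂ then (g a (b+1) - g a b)^2 else 0) := by
          refine (Finset.sum_subset (Finset.range_subset_range.mpr (by omega)) ?_).symm
          intro b hb hnb
          simp only [Finset.mem_range] at hb hnb
          rw [if_neg (by omega)]
      _ = C a := Finset.sum_congr rfl fun b hb =>
          if_pos (by simp only [Finset.mem_range] at hb; omega)
  have hHle : H ≤ ∑ i : Fin N₁ × Fin N₂, ∑ j : Fin N₁ × Fin N₂,
      (if ((i.1:ℕ)+1 = (j.1:ℕ) ∧ (i.2:ℕ) = (j.2:ℕ)) then (φ i - φ j)^2 else 0) := by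
    rw [← hHeq]
    refine Finset.sum_le_sum fun i _ => ?_
    by_cases h : (i.1:ℕ)+1 < N₁
    · rw [if_pos h]
      set j₀ : Fin N₁ × Fin N₂ := (⟨(i.1:ℕ)+1, h⟩, i.2) with hj₀
      have hterm : (g ((i.1:ℕ)+1) (i.2:ℕ) - g (i.1:ℕ) (i.2:ℕ))^2
          = (if ((i.1:ℕ)+1 = (j₀.1:ℕ) ∧ (i.2:ℕ) = (j₀.2:ℕ)) then (φ i - φ j₀)^2 else 0) := by
        rw [if_pos ⟨rfl, rfl⟩]
        have e1 : φ i = g (i.1:ℕ) (i.2:ℕ) := (hg i.1 i.2).symm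
        have e2 : φ j₀ = g ((i.1:ℕ)+1) (i.2:ℕ) := (hg j₀.1 j₀.2).symm
        rw [e1, e2]; ring
      rw [hterm]
      exact Finset.single_le_sum
        (f := fun j => if ((i.1:ℕ)+1 = (j.1:ℕ) ∧ (i.2:ℕ) = (j.2:ℕ)) then (φ i - φ j)^2 else 0)
        (fun j _ => by split_ifs; exacts [sq_nonneg _, le_rfl])
        (Finset.mem_univ j₀)
    · rw [if_neg h]
      refine Finset.sum_nonneg fun j _ => ?_
      split_ifs
      exacts [sq_nonneg _, le_rfl]
  have hVle : V ≤ ∑ i : Fin N₁ × Fin N₂, ∑ j : Fin N₁ × Fin N₂,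
      (if ((i.2:ℕ)+1 = (j.2:ℕ) ∧ (i.1:ℕ) = (j.1:ℕ)) then (φ i - φ j)^2 else 0) := by
    rw [← hVeq]
    refine Finset.sum_le_sum fun i _ => ?_
    by_cases h : (i.2:ℕ)+1 < N₂
    · rw [if_pos h]
      set j₀ : Fin N₁ × Fin N₂ := (i.1, ⟨(i.2:ℕ)+1, h⟩) with hj₀
      have hterm : (g (i.1:ℕ) ((i.2:ℕ)+1) - g (i.1:ℕ) (i.2:ℕ))^2
          = (if ((i.2:ℕ)+1 = (j₀.2:ℕ) ∧ (i.1:ℕ) = (j₀.1:ℕ)) then (φ i - φ j₀)^2 else 0) := by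
        rw [if_pos ⟨rfl, rfl⟩]
        have e1 : φ i = g (i.1:ℕ) (i.2:ℕ) := (hg i.1 i.2).symm
        have e2 : φ j₀ = g (i.1:ℕ) ((i.2:ℕ)+1) := (hg j₀.1 j₀.2).symm
        rw [e1, e2]; ring
      rw [hterm]
      exact Finset.single_le_sum
        (f := fun j => if ((i.2:ℕ)+1 = (j.2:ℕ) ∧ (i.1:ℕ) = (j.1:ℕ)) then (φ i - φ j)^2 else 0)
        (fun j _ => by split_ifs; exacts [sq_nonneg _, le_rfl])
        (Finset.mem_univ j₀)
    · rw [if_neg h]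
      refine Finset.sum_nonneg fun j _ => ?_
      split_ifs
      exacts [sq_nonneg _, le_rfl]
  have hswapP : ∑ i : Fin N₁ × Fin N₂, ∑ j : Fin N₁ × Fin N₂,
      (if ((j.1:ℕ)+1 = (i.1:ℕ) ∧ (j.2:ℕ) = (i.2:ℕ)) then (φ i - φ j)^2 else 0)
      = ∑ i : Fin N₁ × Fin N₂, ∑ j : Fin N₁ × Fin N₂,
      (if ((i.1:ℕ)+1 = (j.1:ℕ) ∧ (i.2:ℕ) = (j.2:ℕ)) then (φ i - φ j)^2 else 0) := by
    rw [Finset.sum_comm]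
    refine Finset.sum_congr rfl fun i _ => Finset.sum_congr rfl fun j _ => ?_
    split_ifs
    · ring
    · rfl
  have hswapQ : ∑ i : Fin N₁ × Fin N₂, ∑ j : Fin N₁ × Fin N₂,
      (if ((j.2:ℕ)+1 = (i.2:ℕ) ∧ (j.1:ℕ) = (i.1:ℕ)) then (φ i - φ j)^2 else 0)
      = ∑ i : Fin N₁ × Fin N₂, ∑ j : Fin N₁ × Fin N₂,
      (if ((i.2:ℕ)+1 = (j.2:ℕ) ∧ (i.1:ℕ) = (j.1:ℕ)) then (φ i - φ j)^2 else 0) := by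
    rw [Finset.sum_comm]
    refine Finset.sum_congr rfl fun i _ => Finset.sum_congr rfl fun j _ => ?_
    split_ifs
    · ring
    · rfl
  have hpw : ∀ i j : Fin N₁ × Fin N₂,
      (if ((i.1:ℕ)+1 = (j.1:ℕ) ∧ (i.2:ℕ) = (j.2:ℕ)) then (φ i - φ j)^2 else 0)
      + (if ((j.1:ℕ)+1 = (i.1:ℕ) ∧ (j.2:ℕ) = (i.2:ℕ)) then (φ i - φ j)^2 else 0)
      + (if ((i.2:ℕ)+1 = (j.2:ℕ) ∧ (i.1:ℕ) = (j.1:ℕ)) then (φ i - φ j)^2 else 0)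
      + (if ((j.2:ℕ)+1 = (i.2:ℕ) ∧ (j.1:ℕ) = (i.1:ℕ)) then (φ i - φ j)^2 else 0)
      ≤ (if G.Adj i j then (φ i - φ j)^2 else 0) := by
    intro i j
    have hd : 0 ≤ (φ i - φ j)^2 := sq_nonneg _
    by_cases hadj : G.Adj i j
    · rw [if_pos hadj]
      rw [hAdjIff] at hadj
      split_ifs <;> first | linarith | (exfalso; omega)
    · rw [if_neg hadj]
      rw [hAdjIff] at hadj
      split_ifs <;> first | linarith | (exfalso; omega)
  have hC' : H + V ≤ lapNum G φ := by
    have hS : 2*H + 2*V ≤ ∑ i, ∑ j, (if G.Adj i j then (φ i - φ j)^2 else 0) := by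
      calc 2*H + 2*V
          ≤ (∑ i : Fin N₁ × Fin N₂, ∑ j : Fin N₁ × Fin N₂,
              (if ((i.1:ℕ)+1 = (j.1:ℕ) ∧ (i.2:ℕ) = (j.2:ℕ)) then (φ i - φ j)^2 else 0))
            + (∑ i : Fin N₁ × Fin N₂, ∑ j : Fin N₁ × Fin N₂,
              (if ((j.1:ℕ)+1 = (i.1:ℕ) ∧ (j.2:ℕ) = (i.2:ℕ)) then (φ i - φ j)^2 else 0))
            + (∑ i : Fin N₁ × Fin N₂, ∑ j : Fin N₁ × Fin N₂,
              (if ((i.2:ℕ)+1 = (j.2:ℕ) ∧ (i.1:ℕ) = (j.1:ℕ)) then (φ i - φ j)^2 else 0))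
            + (∑ i : Fin N₁ × Fin N₂, ∑ j : Fin N₁ × Fin N₂,
              (if ((j.2:ℕ)+1 = (i.2:ℕ) ∧ (j.1:ℕ) = (i.1:ℕ)) then (φ i - φ j)^2 else 0)) := by
            rw [hswapP, hswapQ]
            linarith [hHle, hVle]
        _ = ∑ i : Fin N₁ × Fin N₂, ∑ j : Fin N₁ × Fin N₂,
              ((if ((i.1:ℕ)+1 = (j.1:ℕ) ∧ (i.2:ℕ) = (j.2:ℕ)) then (φ i - φ j)^2 else 0)
              + (if ((j.1:ℕ)+1 = (i.1:ℕ) ∧ (j.2:ℕ) = (i.2:ℕ)) then (φ i - φ j)^2 else 0)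
              + (if ((i.2:ℕ)+1 = (j.2:ℕ) ∧ (i.1:ℕ) = (j.1:ℕ)) then (φ i - φ j)^2 else 0)
              + (if ((j.2:ℕ)+1 = (i.2:ℕ) ∧ (j.1:ℕ) = (i.1:ℕ)) then (φ i - φ j)^2 else 0)) := by
            simp only [Finset.sum_add_distrib]
        _ ≤ ∑ i, ∑ j, (if G.Adj i j then (φ i - φ j)^2 else 0) :=
            Finset.sum_le_sum fun i _ => Finset.sum_le_sum fun j _ => hpw i j
    rw [lapNum]
    linarith
  -- final arithmetic
  set M : ℕ := max N₁ N₂ with hMdef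
  have hM2 : 2 ≤ M := le_trans hN₁2 (le_max_left _ _)
  have hMS : M ≤ N₁ + N₂ := max_le (Nat.le_add_right _ _) (Nat.le_add_left _ _)
  have hn : (0:ℝ) < ((N₁*N₂ : ℕ):ℝ) := by positivity
  have hcancel : A ≤ ((N₁-1 : ℕ):ℝ) * (N₁ * H) + ((N₂-1 : ℕ):ℝ) * (N₂ * V) := by
    have h2n : (0:ℝ) < 2 * ((N₁*N₂ : ℕ):ℝ) := by linarith
    exact le_of_mul_le_mul_left hsum h2n
  have hcoef1 : ((N₁-1 : ℕ):ℝ) * (N₁:ℝ) ≤ (((M-1)*M : ℕ):ℝ) := by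
    have : (N₁-1)*N₁ ≤ (M-1)*M :=
      Nat.mul_le_mul (Nat.sub_le_sub_right (le_max_left _ _) 1) (le_max_left _ _)
    exact_mod_cast this
  have hcoef2 : ((N₂-1 : ℕ):ℝ) * (N₂:ℝ) ≤ (((M-1)*M : ℕ):ℝ) := by
    have : (N₂-1)*N₂ ≤ (M-1)*M :=
      Nat.mul_le_mul (Nat.sub_le_sub_right (le_max_right _ _) 1) (le_max_right _ _)
    exact_mod_cast this
  set K : ℝ := (((M-1)*M : ℕ):ℝ) with hKdef
  have hKpos : 0 < K := by
    rw [hKdef]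
    have : 0 < (M-1)*M := Nat.mul_pos (by omega) (by omega)
    exact_mod_cast this
  have hAK : A ≤ K * (H + V) := by
    have t1 : ((N₁-1 : ℕ):ℝ) * (N₁ * H) ≤ K * H := by
      rw [← mul_assoc]
      exact mul_le_mul_of_nonneg_right hcoef1 hH0
    have t2 : ((N₂-1 : ℕ):ℝ) * (N₂ * V) ≤ K * V := by
      rw [← mul_assoc]
      exact mul_le_mul_of_nonneg_right hcoef2 hV0
    calc A ≤ ((N₁-1 : ℕ):ℝ) * (N₁ * H) + ((N₂-1 : ℕ):ℝ) * (N₂ * V) := hcancel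
      _ ≤ K * H + K * V := add_le_add t1 t2
      _ = K * (H + V) := by ring
  have hAlap : A ≤ K * lapNum G φ :=
    le_trans hAK (mul_le_mul_of_nonneg_left hC' (le_of_lt hKpos))
  have hlap0 : 0 ≤ lapNum G φ := le_trans (by linarith) hC'
  have hKval : K = ((M:ℝ) - 1) * (M:ℝ) := by
    rw [hKdef]
    push_cast [Nat.cast_sub (by omega : 1 ≤ M)]
    ring
  have hm2 : (2:ℝ) ≤ (M:ℝ) := by exact_mod_cast hM2
  have hms : (M:ℝ) ≤ (N₁:ℝ) + (N₂:ℝ) := by exact_mod_cast hMS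
  have hD : (0:ℝ) < (2 * ((N₁ : ℝ) + N₂) + 1) * (2 * (M:ℝ) + 1) := by positivity
  rw [div_le_div_iff₀ hD hA]
  have hDK : 2 * K ≤ (2 * ((N₁ : ℝ) + N₂) + 1) * (2 * (M:ℝ) + 1) := by
    rw [hKval]
    nlinarith [mul_nonneg (sub_nonneg.mpr hms) (by linarith : (0:ℝ) ≤ (M:ℝ)),
      sq_nonneg ((M:ℝ))]
  linarith [mul_le_mul_of_nonneg_left hDK hlap0, hAlap]
end

section
/- For the Cartesian product of M path graphs on N₁, …, N_M vertices (each N_a even), any real function φ with Σφ = 0 and φ ≠ 0 satisfies E_φ ≥ 2/((2(N₁+⋯+N_M)+1)(2·max(N₁,…,N_M)+1)). -/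
open scoped Classical BigOperators

/-- The `M`-dimensional grid graph: the Cartesian product of path graphs on
`N 0, …, N (M-1)` vertices.  Two vertices are adjacent iff they differ in exactly one
coordinate, and in that coordinate they are adjacent in the path graph. -/
def gridGraph (M : ℕ) (N : Fin M → ℕ) : SimpleGraph (∀ a, Fin (N a)) where
  Adj i j := ∃ a, (SimpleGraph.pathGraph (N a)).Adj (i a) (j a) ∧ ∀ b, b ≠ a → i b = j b
  symm := by
    constructor
    rintro i j ⟨a, h, hb⟩
    exact ⟨a, h.symm, fun b hba => (hb b hba).symm⟩
  loopless := by
    constructor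
    rintro i ⟨a, h, -⟩
    exact h.ne rfl



lemma oneD_le (m : ℕ) (g : ℕ → ℝ) {x y : ℕ} (hxy : x ≤ y) (hy : y ≤ m) :
    (g x - g y)^2 ≤ (m:ℝ) * ∑ k ∈ Finset.range m, (g k - g (k+1))^2 := by
  have htel : ∑ k ∈ Finset.Ico x y, (g (k+1) - g k) = g y - g x := by
    rw [Finset.sum_Ico_eq_sub _ hxy, Finset.sum_range_sub (f := g), Finset.sum_range_sub (f := g)]
    ring
  have hCS : (g y - g x)^2 ≤ ((y - x : ℕ) : ℝ) * ∑ k ∈ Finset.Ico x y, (g (k+1) - g k)^2 := by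
    rw [← htel]
    calc (∑ k ∈ Finset.Ico x y, (g (k+1) - g k))^2
        = (∑ k ∈ Finset.Ico x y, 1 * (g (k+1) - g k))^2 := by simp
      _ ≤ (∑ k ∈ Finset.Ico x y, (1:ℝ)^2) * ∑ k ∈ Finset.Ico x y, (g (k+1) - g k)^2 :=
          Finset.sum_mul_sq_le_sq_mul_sq ..
      _ = ((y - x : ℕ) : ℝ) * ∑ k ∈ Finset.Ico x y, (g (k+1) - g k)^2 := by
          simp [Nat.card_Ico]
  have hsub : ∑ k ∈ Finset.Ico x y, (g (k+1) - g k)^2 ≤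
      ∑ k ∈ Finset.range m, (g k - g (k+1))^2 := by
    calc ∑ k ∈ Finset.Ico x y, (g (k+1) - g k)^2
        = ∑ k ∈ Finset.Ico x y, (g k - g (k+1))^2 :=
          Finset.sum_congr rfl (fun k _ => by ring)
      _ ≤ ∑ k ∈ Finset.range m, (g k - g (k+1))^2 := by
          apply Finset.sum_le_sum_of_subset_of_nonneg
          · intro k hk
            simp only [Finset.mem_Ico] at hk
            simp only [Finset.mem_range]
            omega
          · intro k _ _; positivity
  have hxy' : ((y - x : ℕ) : ℝ) ≤ (m : ℝ) := by exact_mod_cast by omega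
  calc (g x - g y)^2 = (g y - g x)^2 := by ring
    _ ≤ ((y - x : ℕ) : ℝ) * ∑ k ∈ Finset.Ico x y, (g (k+1) - g k)^2 := hCS
    _ ≤ (m:ℝ) * ∑ k ∈ Finset.range m, (g k - g (k+1))^2 := by
        apply mul_le_mul hxy' hsub (Finset.sum_nonneg fun k _ => by positivity) (by positivity)

lemma oneD (m : ℕ) (g : ℕ → ℝ) (x y : ℕ) (hx : x ≤ m) (hy : y ≤ m) :
    (g x - g y)^2 ≤ (m:ℝ) * ∑ k ∈ Finset.range m, (g k - g (k+1))^2 := by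
  rcases le_total x y with h | h
  · exact oneD_le m g h hy
  · calc (g x - g y)^2 = (g y - g x)^2 := by ring
      _ ≤ _ := oneD_le m g h hx

section Aux

variable {M : ℕ} {N : Fin M → ℕ}

/-- hybrid point: coords `< t` from `j`, coords `≥ t` from `i`. -/
def gB (i j : ∀ a, Fin (N a)) (t : ℕ) : ∀ a, Fin (N a) :=
  fun b => if (b : ℕ) < t then j b else i b

/-- clamped point in coordinate `a`. -/
def gPt (hNpos : ∀ a, 0 < N a) (a : Fin M) (k : ℕ) : Fin (N a) :=
  ⟨min k (N a - 1), by have := hNpos a; omega⟩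

lemma gB_zero (i j : ∀ a, Fin (N a)) : gB i j 0 = i := by
  funext b; simp [gB]

lemma gB_M (i j : ∀ a, Fin (N a)) : gB i j M = j := by
  funext b; simp [gB, b.isLt]

lemma gB_update_left (i j : ∀ a, Fin (N a)) (a : Fin M) :
    Function.update (gB i j (a : ℕ)) a (i a) = gB i j (a : ℕ) := by
  funext b
  rcases eq_or_ne b a with rfl | hb
  · simp [gB, Function.update_self]
  · simp [Function.update_of_ne hb]

lemma gB_update_right (i j : ∀ a, Fin (N a)) (a : Fin M) :
    Function.update (gB i j (a : ℕ)) a (j a) = gB i j ((a : ℕ) + 1) := by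
  funext b
  rcases eq_or_ne b a with rfl | hb
  · simp [gB, Function.update_self]
  · have hb' : (b : ℕ) ≠ (a : ℕ) := fun h => hb (Fin.ext h)
    simp only [Function.update_of_ne hb, gB]
    by_cases h : (b : ℕ) < (a : ℕ)
    · rw [if_pos h, if_pos (by omega)]
    · rw [if_neg h, if_neg (by omega)]

lemma gB_invol (i j : ∀ b, Fin (N b)) (t : ℕ) :
    gB (gB i j t) (gB j i t) t = i := by
  funext b; by_cases h : (b : ℕ) < t <;> simp [gB, h]

end Aux

section Aux2

variable {M : ℕ} {N : Fin M → ℕ}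

/-- squared difference along edge `k, k+1` of the coordinate-`a` line through `v`. -/
noncomputable def gE (hNpos : ∀ a, 0 < N a) (φ : (∀ a, Fin (N a)) → ℝ)
    (a : Fin M) (k : ℕ) (v : ∀ a, Fin (N a)) : ℝ :=
  (φ (Function.update v a (gPt hNpos a k)) - φ (Function.update v a (gPt hNpos a (k+1))))^2

noncomputable def gLine (hNpos : ∀ a, 0 < N a) (φ : (∀ a, Fin (N a)) → ℝ)
    (a : Fin M) (v : ∀ a, Fin (N a)) : ℝ :=
  ∑ k ∈ Finset.range (N a - 1), gE hNpos φ a k v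

noncomputable def gRight (φ : (∀ a, Fin (N a)) → ℝ) (a : Fin M) (v : ∀ a, Fin (N a)) : ℝ :=
  if h : (v a).val + 1 < N a then (φ v - φ (Function.update v a ⟨(v a).val + 1, h⟩))^2 else 0

variable (hNpos : ∀ a, 0 < N a) (φ : (∀ a, Fin (N a)) → ℝ)

lemma gPt_of_lt (a : Fin M) {k : ℕ} (hk : k < N a) : gPt hNpos a k = ⟨k, hk⟩ := by
  have := hNpos a
  simp only [gPt, Fin.mk.injEq]
  omega

lemma gPt_fin (a : Fin M) (x : Fin (N a)) : gPt hNpos a x.val = x := by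
  rw [gPt_of_lt hNpos a x.isLt]

/-- single-coordinate Poincaré step. -/
lemma gDelta_le (i j : ∀ a, Fin (N a)) (a : Fin M) :
    (φ (gB i j (a : ℕ)) - φ (gB i j ((a : ℕ) + 1)))^2 ≤
      ((N a : ℝ) - 1) * gLine hNpos φ a (gB i j (a : ℕ)) := by
  set v := gB i j (a : ℕ) with hv
  have h1 : φ (gB i j (a : ℕ)) = φ (Function.update v a (gPt hNpos a (i a).val)) := by
    rw [gPt_fin]; exact (congrArg φ (gB_update_left i j a)).symm
  have h2 : φ (gB i j ((a : ℕ) + 1)) = φ (Function.update v a (gPt hNpos a (j a).val)) := by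
    rw [gPt_fin]; exact (congrArg φ (gB_update_right i j a)).symm
  rw [h1, h2]
  have key := oneD (N a - 1) (fun k => φ (Function.update v a (gPt hNpos a k)))
      (i a).val (j a).val (by have := (i a).isLt; omega) (by have := (j a).isLt; omega)
  have hcast : ((N a - 1 : ℕ) : ℝ) = (N a : ℝ) - 1 := by
    have := hNpos a
    push_cast [Nat.cast_sub this]
    ring
  rw [hcast] at key
  simpa [gLine, gE] using key

/-- telescoping over coordinates. -/
lemma gTel (i j : ∀ a, Fin (N a)) :
    ∑ a : Fin M, (φ (gB i j (a : ℕ)) - φ (gB i j ((a : ℕ) + 1))) = φ i - φ j := by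
  have := Fin.sum_univ_eq_sum_range
    (fun t => φ (gB i j t) - φ (gB i j (t + 1))) M
  rw [this]
  have h2 : ∑ t ∈ Finset.range M, (φ (gB i j t) - φ (gB i j (t+1)))
      = -∑ t ∈ Finset.range M, (φ (gB i j (t+1)) - φ (gB i j t)) := by
    rw [← Finset.sum_neg_distrib]
    exact Finset.sum_congr rfl fun t _ => by ring
  rw [h2, Finset.sum_range_sub (f := fun t => φ (gB i j t)), gB_zero, gB_M]
  ring

/-- per-pair bound via weighted Cauchy–Schwarz. -/
lemma gPair (hN2 : ∀ a, 2 ≤ N a) (i j : ∀ a, Fin (N a)) :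
    (φ i - φ j)^2 ≤ (∑ a, ((N a : ℝ) - 1)) * ∑ a, gLine hNpos φ a (gB i j (a : ℕ)) := by
  set w : Fin M → ℝ := fun a => (N a : ℝ) - 1 with hw
  have hw1 : ∀ a, (1:ℝ) ≤ w a := by
    intro a; have := hN2 a
    simp only [hw]
    have : (2:ℝ) ≤ (N a : ℝ) := by exact_mod_cast this
    linarith
  have hwpos : ∀ a, (0:ℝ) < w a := fun a => lt_of_lt_of_le one_pos (hw1 a)
  set δ : Fin M → ℝ := fun a => φ (gB i j (a : ℕ)) - φ (gB i j ((a : ℕ) + 1)) with hδ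
  have htel : φ i - φ j = ∑ a, δ a := (gTel φ i j).symm
  have hCS : (∑ a, δ a)^2 ≤ (∑ a, w a) * ∑ a, (δ a)^2 / w a := by
    have h1 : ∀ a : Fin M, δ a = Real.sqrt (w a) * (δ a / Real.sqrt (w a)) := by
      intro a
      have : Real.sqrt (w a) ≠ 0 := ne_of_gt (Real.sqrt_pos.2 (hwpos a))
      field_simp
    calc (∑ a, δ a)^2 = (∑ a, Real.sqrt (w a) * (δ a / Real.sqrt (w a)))^2 := by
          rw [Finset.sum_congr rfl fun a _ => h1 a]
      _ ≤ (∑ a, Real.sqrt (w a)^2) * ∑ a, (δ a / Real.sqrt (w a))^2 :=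
          Finset.sum_mul_sq_le_sq_mul_sq ..
      _ = (∑ a, w a) * ∑ a, (δ a)^2 / w a := by
          congr 1
          · exact Finset.sum_congr rfl fun a _ => Real.sq_sqrt (hwpos a).le
          · refine Finset.sum_congr rfl fun a _ => ?_
            rw [div_pow, Real.sq_sqrt (hwpos a).le]
  have hterm : ∀ a : Fin M, (δ a)^2 / w a ≤ gLine hNpos φ a (gB i j (a : ℕ)) := by
    intro a
    rw [div_le_iff₀ (hwpos a)]
    calc (δ a)^2 ≤ w a * gLine hNpos φ a (gB i j (a : ℕ)) := gDelta_le hNpos φ i j a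
      _ = gLine hNpos φ a (gB i j (a : ℕ)) * w a := by ring
  calc (φ i - φ j)^2 = (∑ a, δ a)^2 := by rw [htel]
    _ ≤ (∑ a, w a) * ∑ a, (δ a)^2 / w a := hCS
    _ ≤ (∑ a, w a) * ∑ a, gLine hNpos φ a (gB i j (a : ℕ)) := by
        apply mul_le_mul_of_nonneg_left (Finset.sum_le_sum fun a _ => hterm a)
        exact Finset.sum_nonneg fun a _ => by linarith [hw1 a]

/-- reindexing the double sum over hybrids. -/
lemma gReindexB (a : Fin M) (F : (∀ b, Fin (N b)) → ℝ) :
    ∑ i, ∑ j, F (gB i j (a : ℕ)) = (Fintype.card (∀ b, Fin (N b)) : ℝ) * ∑ v, F v := by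
  have hinv : Function.Involutive
      (fun p : (∀ b, Fin (N b)) × (∀ b, Fin (N b)) => (gB p.1 p.2 (a:ℕ), gB p.2 p.1 (a:ℕ))) := by
    intro p
    exact Prod.ext (gB_invol p.1 p.2 (a:ℕ)) (gB_invol p.2 p.1 (a:ℕ))
  have := Equiv.sum_comp hinv.toPerm (fun p : (∀ b, Fin (N b)) × (∀ b, Fin (N b)) => F p.1)
  calc ∑ i, ∑ j, F (gB i j (a : ℕ))
      = ∑ p : (∀ b, Fin (N b)) × (∀ b, Fin (N b)), F (gB p.1 p.2 (a:ℕ)) := by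
        rw [Fintype.sum_prod_type]
    _ = ∑ p : (∀ b, Fin (N b)) × (∀ b, Fin (N b)), F p.1 := this
    _ = ∑ i, ∑ _j : (∀ b, Fin (N b)), F i := by rw [Fintype.sum_prod_type]
    _ = (Fintype.card (∀ b, Fin (N b)) : ℝ) * ∑ v, F v := by
        simp [Finset.sum_const, Finset.card_univ, Finset.mul_sum]

/-- reindexing sums over updates. -/
lemma gReindexU (a : Fin M) (F : (∀ b, Fin (N b)) → ℝ) :
    ∑ v, ∑ x : Fin (N a), F (Function.update v a x) = (N a : ℝ) * ∑ v, F v := by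
  have hinv : Function.Involutive
      (fun p : (∀ b, Fin (N b)) × Fin (N a) => (Function.update p.1 a p.2, p.1 a)) := by
    intro p
    refine Prod.ext ?_ ?_
    · simp [Function.update_idem, Function.update_eq_self]
    · simp [Function.update_self]
  have := Equiv.sum_comp hinv.toPerm (fun p : (∀ b, Fin (N b)) × Fin (N a) => F p.1)
  calc ∑ v, ∑ x : Fin (N a), F (Function.update v a x)
      = ∑ p : (∀ b, Fin (N b)) × Fin (N a), F (Function.update p.1 a p.2) := by
        rw [Fintype.sum_prod_type]
    _ = ∑ p : (∀ b, Fin (N b)) × Fin (N a), F p.1 := this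
    _ = ∑ v, ∑ _x : Fin (N a), F v := by rw [Fintype.sum_prod_type]
    _ = (N a : ℝ) * ∑ v, F v := by
        simp [Finset.sum_const, Finset.mul_sum, mul_comm]

/-- the line sum equals a sum of right-edge terms over updated points. -/
lemma gLine_right (a : Fin M) (v : ∀ b, Fin (N b)) :
    gLine hNpos φ a v = ∑ x : Fin (N a), gRight φ a (Function.update v a x) := by
  set h' : ℕ → ℝ := fun k => if k + 1 < N a then gE hNpos φ a k v else 0 with hh
  have claim1 : ∀ x : Fin (N a), gRight φ a (Function.update v a x) = h' x.val := by
    intro x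
    simp only [gRight, Function.update_self, Function.update_idem, hh]
    by_cases h : x.val + 1 < N a
    · rw [dif_pos h, if_pos h]
      simp only [gE]
      rw [gPt_fin, gPt_of_lt hNpos a h]
    · rw [dif_neg h, if_neg h]
  have claim2 : ∑ x : Fin (N a), gRight φ a (Function.update v a x)
      = ∑ k ∈ Finset.range (N a), h' k := by
    rw [Finset.sum_congr rfl fun x _ => claim1 x]
    exact Fin.sum_univ_eq_sum_range h' (N a)
  have claim3 : ∑ k ∈ Finset.range (N a - 1), h' k = ∑ k ∈ Finset.range (N a), h' k := by
    apply Finset.sum_subset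
    · apply Finset.range_subset_range.2; omega
    · intro k hk hk'
      simp only [Finset.mem_range] at hk hk'
      simp only [hh]
      rw [if_neg (by omega)]
  rw [claim2, ← claim3, gLine]
  refine Finset.sum_congr rfl fun k hk => ?_
  simp only [Finset.mem_range] at hk
  have := hNpos a
  simp only [hh]
  rw [if_pos (by omega)]

/-- decomposition of the Laplacian numerator into right-edge sums. -/
lemma gLap :
    (∑ i, ∑ j, if (gridGraph M N).Adj i j then (φ i - φ j)^2 else 0)
      = 2 * ∑ a : Fin M, ∑ v, gRight φ a v := by
  set dA : Fin M → (∀ b, Fin (N b)) → (∀ b, Fin (N b)) → Prop :=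
    fun a i j => (SimpleGraph.pathGraph (N a)).Adj (i a) (j a) ∧ ∀ b, b ≠ a → i b = j b with hdA
  have hpoint : ∀ i j : (∀ b, Fin (N b)),
      (if (gridGraph M N).Adj i j then (φ i - φ j)^2 else 0)
        = ∑ a : Fin M, (if dA a i j then (φ i - φ j)^2 else 0) := by
    intro i j
    have hAdj : (gridGraph M N).Adj i j ↔
        ∃ a, (SimpleGraph.pathGraph (N a)).Adj (i a) (j a) ∧ ∀ b, b ≠ a → i b = j b := Iff.rfl
    by_cases hadj : (gridGraph M N).Adj i j
    · obtain ⟨a, ha1, ha2⟩ := hAdj.1 hadj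
      have hz : ∀ b ∈ Finset.univ, b ≠ a →
          (if dA b i j then (φ i - φ j)^2 else 0) = 0 := by
        intro b _ hba
        rw [if_neg]
        rintro ⟨hb1, -⟩
        exact hb1.ne (ha2 b hba)
      rw [if_pos hadj, Finset.sum_eq_single_of_mem a (Finset.mem_univ a) hz,
        if_pos (show dA a i j from ⟨ha1, ha2⟩)]
    · rw [if_neg hadj]
      symm
      apply Finset.sum_eq_zero
      intro a _
      rw [if_neg]
      intro hda
      exact hadj (hAdj.2 ⟨a, hda.1, hda.2⟩)
  have hsplit : ∀ a : Fin M, (∑ i, ∑ j, if dA a i j then (φ i - φ j)^2 else 0)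
      = 2 * ∑ v, gRight φ a v := by
    intro a
    set T : (∀ b, Fin (N b)) → (∀ b, Fin (N b)) → ℝ :=
      fun i j => if dA a i j ∧ (i a).val + 1 = (j a).val then (φ i - φ j)^2 else 0 with hT
    have hpt : ∀ i j, (if dA a i j then (φ i - φ j)^2 else 0) = T i j + T j i := by
      intro i j
      by_cases hda : dA a i j
      · have hor : (i a).val + 1 = (j a).val ∨ (j a).val + 1 = (i a).val :=
          SimpleGraph.pathGraph_adj.1 hda.1
        have hda' : dA a j i := ⟨hda.1.symm, fun b hb => (hda.2 b hb).symm⟩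
        rcases hor with h1 | h1
        · rw [if_pos hda, hT]
          simp only
          rw [if_pos ⟨hda, h1⟩, if_neg (by rintro ⟨-, h2⟩; omega)]
          ring
        · rw [if_pos hda, hT]
          simp only
          rw [if_neg (by rintro ⟨-, h2⟩; omega), if_pos ⟨hda', h1⟩]
          ring
      · have hda' : ¬ dA a j i := fun h => hda ⟨h.1.symm, fun b hb => (h.2 b hb).symm⟩
        rw [if_neg hda, hT]
        simp only
        rw [if_neg (by rintro ⟨h, -⟩; exact hda h), if_neg (by rintro ⟨h, -⟩; exact hda' h)]
        ring
    have hswap : (∑ i, ∑ j, T j i) = ∑ i, ∑ j, T i j := Finset.sum_comm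
    have hTright : ∀ i, (∑ j, T i j) = gRight φ a i := by
      intro i
      by_cases h : (i a).val + 1 < N a
      · set j₀ := Function.update i a ⟨(i a).val + 1, h⟩ with hj₀
        have hj₀a : (j₀ a) = ⟨(i a).val + 1, h⟩ := Function.update_self a _ i
        have hcond : dA a i j₀ ∧ (i a).val + 1 = (j₀ a).val := by
          refine ⟨⟨SimpleGraph.pathGraph_adj.2 (Or.inl ?_), fun b hb => ?_⟩, ?_⟩
          · rw [hj₀a]
          · rw [hj₀, Function.update_of_ne hb]
          · rw [hj₀a]
        have := Finset.sum_eq_single_of_mem j₀ (Finset.mem_univ j₀)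
          (f := fun j => T i j) ?_
        · rw [this, hT]
          simp only
          rw [if_pos hcond, gRight, dif_pos h]
        · intro j _ hj
          rw [hT]
          simp only
          rw [if_neg]
          rintro ⟨⟨-, heq⟩, hR⟩
          apply hj
          funext b
          rcases eq_or_ne b a with rfl | hb
          · rw [hj₀a]
            exact Fin.ext hR.symm
          · rw [hj₀, Function.update_of_ne hb]
            exact (heq b hb).symm
      · have h0 : ∀ j, T i j = 0 := by
          intro j
          rw [hT]
          simp only
          rw [if_neg]
          rintro ⟨-, hR⟩
          exact h (hR ▸ (j a).isLt)
        rw [Finset.sum_eq_zero fun j _ => h0 j, gRight, dif_neg h]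
    calc (∑ i, ∑ j, if dA a i j then (φ i - φ j)^2 else 0)
        = ∑ i, ∑ j, (T i j + T j i) := by
          exact Finset.sum_congr rfl fun i _ => Finset.sum_congr rfl fun j _ => hpt i j
      _ = (∑ i, ∑ j, T i j) + ∑ i, ∑ j, T j i := by
          rw [← Finset.sum_add_distrib]
          exact Finset.sum_congr rfl fun i _ => Finset.sum_add_distrib
      _ = 2 * ∑ i, ∑ j, T i j := by rw [hswap]; ring
      _ = 2 * ∑ v, gRight φ a v := by
          rw [Finset.sum_congr rfl fun i _ => hTright i]
    
  calc (∑ i, ∑ j, if (gridGraph M N).Adj i j then (φ i - φ j)^2 else 0)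
      = ∑ i, ∑ j, ∑ a : Fin M, (if dA a i j then (φ i - φ j)^2 else 0) := by
        exact Finset.sum_congr rfl fun i _ => Finset.sum_congr rfl fun j _ => hpoint i j
    _ = ∑ i, ∑ a : Fin M, ∑ j, (if dA a i j then (φ i - φ j)^2 else 0) :=
        Finset.sum_congr rfl fun i _ => Finset.sum_comm
    _ = ∑ a : Fin M, ∑ i, ∑ j, (if dA a i j then (φ i - φ j)^2 else 0) :=
        Finset.sum_comm
    _ = ∑ a : Fin M, 2 * ∑ v, gRight φ a v := Finset.sum_congr rfl fun a _ => hsplit a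
    _ = 2 * ∑ a : Fin M, ∑ v, gRight φ a v := by rw [Finset.mul_sum]

/-- sum of squared differences in terms of the variance. -/
lemma gSumSq {V : Type*} [Fintype V] (f : V → ℝ) (h : ∑ i, f i = 0) :
    ∑ i, ∑ j, (f i - f j)^2 = 2 * (Fintype.card V : ℝ) * ∑ i, (f i)^2 := by
  have hexp : ∀ i j : V, (f i - f j)^2 = f i^2 - 2*(f i * f j) + f j^2 := fun i j => by ring
  simp only [hexp, Finset.sum_add_distrib, Finset.sum_sub_distrib, ← Finset.mul_sum,
    h, Finset.sum_const, Finset.card_univ, nsmul_eq_mul, mul_zero, zero_mul, sub_zero]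
  ring

end Aux2

/-- **Example 3: M-dimensional chain.**  For the Cartesian product of `M` path graphs on
`N₁, …, N_M` vertices (each even), any nonzero mean-zero real function `φ` satisfies
`E_φ ≥ 2 / ((2(N₁+⋯+N_M)+1)(2 max(N₁,…,N_M)+1))`. -/
theorem gridM_rayleigh_bound (M : ℕ) (N : Fin M → ℕ) (hN : ∀ a, Even (N a))
    (φ : (∀ a, Fin (N a)) → ℝ) (hφ0 : ∑ i, φ i = 0) (hφne : φ ≠ 0) :
    2 / ((2 * (∑ a, (N a : ℝ)) + 1) * (2 * ((Finset.univ.sup N : ℕ) : ℝ) + 1)) ≤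
      lapNum (gridGraph M N) φ / ∑ i, (φ i) ^ 2 := by
  classical
  have hNpos : ∀ a, 0 < N a := by
    intro a
    by_contra h
    push_neg at h
    apply hφne
    funext v
    exact absurd (v a).isLt (by omega)
  have hN2 : ∀ a, 2 ≤ N a := by
    intro a
    rcases hN a with ⟨r, hr⟩
    have := hNpos a
    omega
  have hMpos : 0 < M := by
    by_contra hM
    push_neg at hM
    apply hφne
    have v₀ : ∀ a, Fin (N a) := fun a => ⟨0, hNpos a⟩
    have hall : ∀ v : ∀ a, Fin (N a), v = v₀ := by
      intro v; funext a; exact absurd a.isLt (by omega)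
    have hone : ∑ i : ∀ a, Fin (N a), φ i = (Fintype.card (∀ a, Fin (N a)) : ℝ) * φ v₀ := by
      calc ∑ i : ∀ a, Fin (N a), φ i = ∑ _i : ∀ a, Fin (N a), φ v₀ :=
            Finset.sum_congr rfl fun i _ => by rw [hall i]
        _ = (Fintype.card (∀ a, Fin (N a)) : ℝ) * φ v₀ := by
            rw [Finset.sum_const, Finset.card_univ, nsmul_eq_mul]
    have hcardpos : 0 < Fintype.card (∀ a, Fin (N a)) :=
      @Fintype.card_pos _ _ ⟨v₀⟩
    have hv0 : φ v₀ = 0 := by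
      rw [hφ0] at hone
      have hne : (Fintype.card (∀ a, Fin (N a)) : ℝ) ≠ 0 := by positivity
      rcases mul_eq_zero.1 hone.symm with h | h
      · exact absurd h hne
      · exact h
    funext v
    rw [hall v, hv0]
    rfl
  have hcardpos : 0 < Fintype.card (∀ a, Fin (N a)) :=
    @Fintype.card_pos _ _ ⟨fun a => ⟨0, hNpos a⟩⟩
  set n : ℝ := (Fintype.card (∀ a, Fin (N a)) : ℝ) with hn
  have hnpos : 0 < n := by rw [hn]; exact_mod_cast hcardpos
  set S : ℝ := ∑ a, (N a : ℝ) with hS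
  set T : ℝ := ((Finset.univ.sup N : ℕ) : ℝ) with hT
  set D : ℝ := ∑ a : Fin M, ((N a : ℝ) - 1) with hD
  have hNa_le_T : ∀ a, (N a : ℝ) ≤ T := fun a => by
    rw [hT]; exact_mod_cast Finset.le_sup (Finset.mem_univ a)
  have hT2 : (2:ℝ) ≤ T :=
    le_trans (by exact_mod_cast hN2 ⟨0, hMpos⟩) (hNa_le_T ⟨0, hMpos⟩)
  have hT0 : (0:ℝ) ≤ T := by linarith
  have hD1 : (1:ℝ) ≤ D := by
    have h1 : ∀ a : Fin M, (1:ℝ) ≤ (N a : ℝ) - 1 := fun a => by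
      have : (2:ℝ) ≤ (N a : ℝ) := by exact_mod_cast hN2 a
      linarith
    calc (1:ℝ) ≤ (M:ℝ) := by exact_mod_cast hMpos
      _ = ∑ _a : Fin M, (1:ℝ) := by simp
      _ ≤ D := Finset.sum_le_sum fun a _ => h1 a
  have hD0 : (0:ℝ) ≤ D := by linarith
  have hDS : D ≤ S := Finset.sum_le_sum fun a _ => by
    have : (0:ℝ) ≤ (N a : ℝ) := Nat.cast_nonneg _
    linarith
  have hS0 : (0:ℝ) ≤ S := by linarith
  have hφsq : 0 < ∑ i, (φ i)^2 := by
    obtain ⟨v, hv⟩ := Function.ne_iff.1 hφne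
    have hv' : φ v ≠ 0 := hv
    have h1 : (0:ℝ) < (φ v)^2 :=
      lt_of_le_of_ne (sq_nonneg (φ v)) (Ne.symm (pow_ne_zero 2 hv'))
    exact lt_of_lt_of_le h1 (Finset.single_le_sum (fun i _ => sq_nonneg (φ i)) (Finset.mem_univ v))
  have hgR0 : ∀ (a : Fin M) (v : ∀ b, Fin (N b)), 0 ≤ gRight φ a v := by
    intro a v
    simp only [gRight]
    split
    · positivity
    · exact le_refl 0
  set R : ℝ := ∑ a : Fin M, ∑ v, gRight φ a v with hR
  have hR0 : 0 ≤ R :=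
    Finset.sum_nonneg fun a _ => Finset.sum_nonneg fun v _ => hgR0 a v
  have main : 2 * n * ∑ i, (φ i)^2 ≤ n * (D * T * R) := by
    calc 2 * n * ∑ i, (φ i)^2
        = ∑ i, ∑ j, (φ i - φ j)^2 := (gSumSq φ hφ0).symm
      _ ≤ ∑ i, ∑ j, (D * ∑ a, gLine hNpos φ a (gB i j (a:ℕ))) :=
          Finset.sum_le_sum fun i _ => Finset.sum_le_sum fun j _ => gPair hNpos φ hN2 i j
      _ = D * ∑ i, ∑ j, ∑ a : Fin M, gLine hNpos φ a (gB i j (a:ℕ)) := by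
          simp only [← Finset.mul_sum]
      _ = D * ∑ a : Fin M, ∑ i, ∑ j, gLine hNpos φ a (gB i j (a:ℕ)) := by
          congr 1
          calc ∑ i, ∑ j, ∑ a : Fin M, gLine hNpos φ a (gB i j (a:ℕ))
              = ∑ i, ∑ a : Fin M, ∑ j, gLine hNpos φ a (gB i j (a:ℕ)) :=
                Finset.sum_congr rfl fun i _ => Finset.sum_comm
            _ = ∑ a : Fin M, ∑ i, ∑ j, gLine hNpos φ a (gB i j (a:ℕ)) := Finset.sum_comm
      _ = D * ∑ a : Fin M, (n * ∑ v, gLine hNpos φ a v) := by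
          congr 1
          exact Finset.sum_congr rfl fun a _ => gReindexB a (gLine hNpos φ a)
      _ = D * ∑ a : Fin M, (n * ((N a : ℝ) * ∑ v, gRight φ a v)) := by
          refine congrArg _ (Finset.sum_congr rfl fun a _ => ?_)
          congr 1
          rw [Finset.sum_congr rfl fun v _ => gLine_right hNpos φ a v]
          exact gReindexU a (gRight φ a)
      _ ≤ D * ∑ a : Fin M, (n * (T * ∑ v, gRight φ a v)) := by
          refine mul_le_mul_of_nonneg_left (Finset.sum_le_sum fun a _ => ?_) hD0
          refine mul_le_mul_of_nonneg_left ?_ (le_of_lt hnpos)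
          exact mul_le_mul_of_nonneg_right (hNa_le_T a)
            (Finset.sum_nonneg fun v _ => hgR0 a v)
      _ = n * (D * T * R) := by
          have h2 : ∑ a : Fin M, (n * (T * ∑ v, gRight φ a v))
              = n * T * ∑ a : Fin M, ∑ v, gRight φ a v := by
            rw [Finset.mul_sum]
            exact Finset.sum_congr rfl fun a _ => by ring
          rw [h2, ← hR]
          ring
  have key2 : 2 * ∑ i, (φ i)^2 ≤ D * T * R := by
    have h' : n * (2 * ∑ i, (φ i)^2) ≤ n * (D * T * R) := by
      calc n * (2 * ∑ i, (φ i)^2) = 2 * n * ∑ i, (φ i)^2 := by ring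
        _ ≤ n * (D * T * R) := main
    exact le_of_mul_le_mul_left h' hnpos
  have hlap : lapNum (gridGraph M N) φ = R := by
    unfold lapNum
    rw [gLap φ, hR]
    ring
  have hpos2 : (0:ℝ) < (2 * S + 1) * (2 * T + 1) := by nlinarith
  rw [div_le_div_iff₀ hpos2 hφsq]
  have hlap0 : 0 ≤ lapNum (gridGraph M N) φ := by rw [hlap]; exact hR0
  have h1 : D * T ≤ (2 * S + 1) * (2 * T + 1) := by nlinarith [mul_nonneg hS0 hT0]
  calc 2 * ∑ i, (φ i)^2 ≤ D * T * R := key2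
    _ = D * T * lapNum (gridGraph M N) φ := by rw [hlap]
    _ ≤ (2 * S + 1) * (2 * T + 1) * lapNum (gridGraph M N) φ :=
        mul_le_mul_of_nonneg_right h1 hlap0
    _ = lapNum (gridGraph M N) φ * ((2 * S + 1) * (2 * T + 1)) := by ring
end

section
/- Let v ∈ ℂ² be a unit vector and define the history state ψ = Σ_{i=0}^{N} e_i ⊗ (U_i ⋯ U_1 v) ∈ ℂ^{N+1} ⊗ ℂ², where U₁,…,U_N ∈ U(2) and e_i is the standard basis of ℂ^{N+1}. Then ψ is annihilated by each operator h_i = (|e_i⟩⟨e_i| + |e_{i−1}⟩⟨e_{i−1}|) ⊗ I − |e_i⟩⟨e_{i−1}| ⊗ U_i − |e_{i−1}⟩⟨e_i| ⊗ U_i†, each h_i is positive semi-definite, and ψ spans the joint kernel of {h_i : 1 ≤ i ≤ N} intersected with the space of states whose i=0 component is proportional to v. -/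
open scoped BigOperators

/-- The ordered product `U_k ⋯ U_1` of the first `k` gates (identity for `k = 0`). -/
noncomputable def prodU {N : ℕ} (U : Fin N → Matrix (Fin 2) (Fin 2) ℂ) :
    ℕ → Matrix (Fin 2) (Fin 2) ℂ
  | 0 => 1
  | k + 1 => (if h : k < N then U ⟨k, h⟩ else 1) * prodU U k

/-- The history state `ψ = ∑_{i=0}^N e_i ⊗ (U_i ⋯ U_1 v)`, viewed as a function
`Fin (N+1) → (Fin 2 → ℂ)` on the clock register with qubit-valued components. -/
noncomputable def historyState {N : ℕ} (U : Fin N → Matrix (Fin 2) (Fin 2) ℂ)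
    (v : Fin 2 → ℂ) : Fin (N + 1) → Fin 2 → ℂ :=
  fun i => (prodU U (i : ℕ)).mulVec v

/-- The gate operator
`h_i = (|e_i⟩⟨e_i| + |e_{i-1}⟩⟨e_{i-1}|) ⊗ I - |e_i⟩⟨e_{i-1}| ⊗ U_i - |e_{i-1}⟩⟨e_i| ⊗ U_i†`,
acting on `ℂ^{N+1} ⊗ ℂ² ≅ (Fin (N+1) → Fin 2 → ℂ)`; here the gate labelled by `i : Fin N`
couples clock sites `i.castSucc` (time `i-1`) and `i.succ` (time `i`). -/
noncomputable def gateOp {N : ℕ} (U : Matrix (Fin 2) (Fin 2) ℂ) (i : Fin N)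
    (f : Fin (N + 1) → Fin 2 → ℂ) : Fin (N + 1) → Fin 2 → ℂ := fun j =>
  (if j = i.succ then f i.succ - U.mulVec (f i.castSucc) else 0) +
    (if j = i.castSucc then f i.castSucc - U.conjTranspose.mulVec (f i.succ) else 0)

open scoped Matrix

set_option maxRecDepth 8000 in
/-- The history state is annihilated by each gate operator `h_i`; each `h_i` is positive
semi-definite; and the history state spans the joint kernel of the `h_i` intersected with
the space of states whose `i = 0` clock component is proportional to `v`. -/
theorem history_state_spans_kernel {N : ℕ}
    (U : Fin N → Matrix (Fin 2) (Fin 2) ℂ)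
    (hU : ∀ i, U i ∈ Matrix.unitaryGroup (Fin 2) ℂ)
    (v : Fin 2 → ℂ) (hv : ∑ b, ‖v b‖ ^ 2 = 1) :
    (∀ i : Fin N, gateOp (U i) i (historyState U v) = 0) ∧
    (∀ (i : Fin N) (f : Fin (N + 1) → Fin 2 → ℂ),
      0 ≤ (∑ j, ∑ b, (starRingEnd ℂ) (f j b) * gateOp (U i) i f j b).re) ∧
    (∀ f : Fin (N + 1) → Fin 2 → ℂ,
      (∀ i : Fin N, gateOp (U i) i f = 0) →
      (∃ c : ℂ, f 0 = c • v) →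
      ∃ c : ℂ, f = c • historyState U v) := by

  have hUs : ∀ i, (U i).conjTranspose * (U i) = 1 := fun i => (hU i).1
  have hne : ∀ i : Fin N, (i.succ : Fin (N+1)) ≠ i.castSucc :=
    fun i => (Fin.castSucc_lt_succ : i.castSucc < i.succ).ne'
  have hstep0 : ∀ i : Fin N,
      historyState U v i.succ = (U i).mulVec (historyState U v i.castSucc) := by
    intro i
    simp [historyState, Fin.val_succ, Fin.coe_castSucc, prodU, i.isLt,
      Matrix.mulVec_mulVec]
    simp only [Matrix.mul_apply, Fin.sum_univ_two]
    constructor <;> ring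
  refine ⟨?_, ?_, ?_⟩
  · intro i
    funext j
    have h1 : historyState U v i.succ - (U i).mulVec (historyState U v i.castSucc) = 0 := by
      rw [hstep0 i, sub_self]
    have h2 : historyState U v i.castSucc
        - (U i).conjTranspose.mulVec (historyState U v i.succ) = 0 := by
      rw [hstep0 i, Matrix.mulVec_mulVec, hUs i, Matrix.one_mulVec, sub_self]
    simp only [gateOp, h1, h2, ite_self, add_zero, Pi.zero_apply]
  · intro i f
    have expand : ∀ j b, gateOp (U i) i f j b
        = (if j = i.succ then (f i.succ - (U i).mulVec (f i.castSucc)) b else 0)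
          + (if j = i.castSucc then
              (f i.castSucc - (U i).conjTranspose.mulVec (f i.succ)) b else 0) := by
      intro j b
      simp only [gateOp, Pi.add_apply, ite_apply, Pi.zero_apply]
    have hterm : ∀ j, (∑ b, (starRingEnd ℂ) (f j b) * gateOp (U i) i f j b)
        = (if j = i.succ then
            star (f j) ⬝ᵥ (f i.succ - (U i).mulVec (f i.castSucc)) else 0)
          + (if j = i.castSucc then
            star (f j) ⬝ᵥ (f i.castSucc - (U i).conjTranspose.mulVec (f i.succ)) else 0) := by
      intro j
      calc ∑ b, (starRingEnd ℂ) (f j b) * gateOp (U i) i f j b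
          = ∑ b, ((starRingEnd ℂ) (f j b)
                * (if j = i.succ then (f i.succ - (U i).mulVec (f i.castSucc)) b else 0)
              + (starRingEnd ℂ) (f j b)
                * (if j = i.castSucc then
                    (f i.castSucc - (U i).conjTranspose.mulVec (f i.succ)) b else 0)) := by
            refine Finset.sum_congr rfl fun b _ => ?_
            rw [expand j b, mul_add]
        _ = _ := by
            rw [Finset.sum_add_distrib]
            congr 1
            · split_ifs with h
              · simp only [dotProduct, Pi.star_apply, starRingEnd_apply]
              · simp
            · split_ifs with h
              · simp only [dotProduct, Pi.star_apply, starRingEnd_apply]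
              · simp
    have hsum : (∑ j, ∑ b, (starRingEnd ℂ) (f j b) * gateOp (U i) i f j b)
        = star (f i.succ) ⬝ᵥ (f i.succ - (U i).mulVec (f i.castSucc))
          + star (f i.castSucc) ⬝ᵥ (f i.castSucc - (U i).conjTranspose.mulVec (f i.succ)) := by
      rw [Finset.sum_congr rfl fun j _ => hterm j, Finset.sum_add_distrib,
        Finset.sum_ite_eq' Finset.univ i.succ, Finset.sum_ite_eq' Finset.univ i.castSucc]
      simp
    have hadj : ∀ x y : Fin 2 → ℂ,
        star x ⬝ᵥ (U i).conjTranspose.mulVec y = star ((U i).mulVec x) ⬝ᵥ y := fun x y => by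
      rw [Matrix.star_mulVec, Matrix.dotProduct_mulVec]
    have hpres : star ((U i).mulVec (f i.castSucc)) ⬝ᵥ ((U i).mulVec (f i.castSucc))
        = star (f i.castSucc) ⬝ᵥ (f i.castSucc) := by
      rw [Matrix.star_mulVec, Matrix.dotProduct_mulVec, Matrix.vecMul_vecMul, hUs i,
        Matrix.vecMul_one]
    have key : star (f i.succ) ⬝ᵥ (f i.succ - (U i).mulVec (f i.castSucc))
          + star (f i.castSucc) ⬝ᵥ (f i.castSucc - (U i).conjTranspose.mulVec (f i.succ))
        = star (f i.succ - (U i).mulVec (f i.castSucc))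
            ⬝ᵥ (f i.succ - (U i).mulVec (f i.castSucc)) := by
      simp only [dotProduct_sub, sub_dotProduct, star_sub, hadj, hpres]
      ring
    have hnormsq : star (f i.succ - (U i).mulVec (f i.castSucc))
            ⬝ᵥ (f i.succ - (U i).mulVec (f i.castSucc))
        = ∑ b, (Complex.normSq ((f i.succ - (U i).mulVec (f i.castSucc)) b) : ℂ) := by
      simp only [dotProduct, Pi.star_apply, Complex.star_def,
        Complex.normSq_eq_conj_mul_self]
    rw [hsum, key, hnormsq, Complex.re_sum]
    refine Finset.sum_nonneg fun b _ => ?_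
    simp [Complex.normSq_nonneg]
  · rintro f hf ⟨c, hc⟩
    have hstep : ∀ i : Fin N, f i.succ = (U i).mulVec (f i.castSucc) := by
      intro i
      have h := congrFun (hf i) i.succ
      simp only [gateOp, hne i, ↓reduceIte, add_zero, Pi.zero_apply, sub_eq_zero] at h
      exact h
    have main : ∀ k (h : k < N + 1), f ⟨k, h⟩ = c • (prodU U k).mulVec v := by
      intro k
      induction k with
      | zero =>
        intro h
        simpa [prodU, Matrix.one_mulVec, show (⟨0, h⟩ : Fin (N+1)) = 0 from rfl] using hc
      | succ k ih =>
        intro h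
        have hkN : k < N := Nat.lt_of_succ_lt_succ h
        have hi : (⟨k+1, h⟩ : Fin (N+1)) = (⟨k, hkN⟩ : Fin N).succ := rfl
        have hic : ((⟨k, hkN⟩ : Fin N).castSucc : Fin (N+1)) = ⟨k, Nat.lt_succ_of_lt hkN⟩ := rfl
        rw [hi, hstep, hic, ih]
        simp [prodU, hkN, Matrix.mulVec_smul, Matrix.mulVec_mulVec]
        simp only [Matrix.mul_apply, Fin.sum_univ_two]
        constructor <;> ring
    refine ⟨c, funext fun j => ?_⟩
    have := main j.val j.isLt
    simpa [historyState, Fin.eta] using this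
end

section
/- For the single-qubit GSQC Hamiltonian with identity gates, H(λ) on ℂ^{N+1} given by the sum of hop terms h_i = |e_i − e_{i−1}|-projectors for 2 ≤ i ≤ N and the λ-dependent first hop h₁(λ) with matrix elements ⟨e₁|h₁|e₁⟩ = 1, ⟨e₀|h₁|e₀⟩ = λ², ⟨e₁|h₁|e₀⟩ = −λ: the unnormalized vector ψ_λ = e₀ + λ(e₁ + ⋯ + e_N) is the unique zero-energy ground state, and its normalized form satisfies |⟨e₀, ψ_λ⟩|²/‖ψ_λ‖² = 1/(1 + N λ²) ≥ 1/(N+1). -/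
open scoped BigOperators

/-- The single-qubit identity-gate GSQC Hamiltonian `H(λ)` on `ℂ^{N+1}`:
the sum over gates `i : Fin N` of the rank-one terms
`(|e_{i+1}⟩ - c_i |e_i⟩)(⟨e_{i+1}| - c_i ⟨e_i|)` where `c_0 = λ` (the λ-dependent first hop,
with `⟨e₁|h₁|e₁⟩ = 1`, `⟨e₀|h₁|e₀⟩ = λ²`, `⟨e₁|h₁|e₀⟩ = -λ`) and `c_i = 1` for `i ≥ 1`. -/
noncomputable def chainH (N : ℕ) (lam : ℝ) (f : Fin (N + 1) → ℂ) : Fin (N + 1) → ℂ :=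
  ∑ i : Fin N, (fun j =>
    (if j = i.succ then 1 else 0) *
        (f i.succ - (if (i : ℕ) = 0 then (lam : ℂ) else 1) * f i.castSucc) -
      (if j = i.castSucc then 1 else 0) * (if (i : ℕ) = 0 then (lam : ℂ) else 1) *
        (f i.succ - (if (i : ℕ) = 0 then (lam : ℂ) else 1) * f i.castSucc))

/-- The unnormalized vector `ψ_λ = e₀ + λ(e₁ + ⋯ + e_N)`. -/
noncomputable def psiLam (N : ℕ) (lam : ℝ) : Fin (N + 1) → ℂ :=
  fun j => if j = 0 then 1 else (lam : ℂ)

/-- `ψ_λ` is the unique zero-energy ground state of the single-qubit GSQC Hamiltonian with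
identity gates, and its normalized `e₀`-weight is
`|⟨e₀, ψ_λ⟩|²/‖ψ_λ‖² = 1/(1 + Nλ²) ≥ 1/(N+1)`. -/
theorem chainH_ground_state (N : ℕ) (hN : 1 ≤ N) (lam : ℝ)
    (hlam0 : 0 < lam) (hlam1 : lam ≤ 1) :
    chainH N lam (psiLam N lam) = 0 ∧
    (∀ f : Fin (N + 1) → ℂ, chainH N lam f = 0 → ∃ c : ℂ, f = c • psiLam N lam) ∧
    ‖psiLam N lam 0‖ ^ 2 / ∑ j, ‖psiLam N lam j‖ ^ 2 = 1 / (1 + N * lam ^ 2) ∧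
    (1 : ℝ) / (1 + N * lam ^ 2) ≥ 1 / (N + 1) := by
  refine ⟨?_, ?_, ?_, ?_⟩
  · unfold chainH
    apply Finset.sum_eq_zero
    intro i _
    have hd : psiLam N lam i.succ -
        (if (i : ℕ) = 0 then (lam : ℂ) else 1) * psiLam N lam i.castSucc = 0 := by
      have h1 : i.succ ≠ 0 := Fin.succ_ne_zero i
      by_cases h : (i : ℕ) = 0
      · have h2 : i.castSucc = 0 := by ext; simpa using h
        simp [psiLam, h, h1, h2]
      · have h2 : i.castSucc ≠ 0 := by
          intro hh; exact h (by simpa using congrArg Fin.val hh)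
        simp [psiLam, h, h1, h2]
    funext j
    simp only [hd, mul_zero, sub_zero, sub_self, Pi.zero_apply]
  · intro f hf
    set c : Fin N → ℂ := fun i => if (i : ℕ) = 0 then (lam : ℂ) else 1 with hc
    set d : Fin N → ℂ := fun i => f i.succ - c i * f i.castSucc with hdd
    have hcc : ∀ i, (starRingEnd ℂ) (c i) = c i := by
      intro i; simp only [hc]; split <;> simp
    have hquad : ∑ i : Fin N, (Complex.normSq (d i) : ℂ) = 0 := by
      have h0 : ∑ j, (starRingEnd ℂ) (f j) * chainH N lam f j = 0 := by
        rw [hf]; simp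
      rw [← h0]
      symm
      unfold chainH
      simp only [Finset.sum_apply, Finset.mul_sum]
      rw [Finset.sum_comm]
      apply Finset.sum_congr rfl
      intro i _
      have hC : (if ((i : ℕ) = 0) then (lam : ℂ) else 1) = c i := rfl
      rw [hC]
      simp only [mul_sub, Finset.sum_sub_distrib, ite_mul, one_mul, zero_mul,
        mul_ite, mul_zero, Finset.sum_ite_eq', Finset.mem_univ, if_true]
      have hn : (Complex.normSq (d i) : ℂ) = (starRingEnd ℂ) (d i) * d i := by
        rw [Complex.normSq_eq_conj_mul_self]
      rw [hn, hdd]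
      simp only [map_sub, map_mul, hcc, hc]
      have hstar : (starRingEnd ℂ) (if (i : ℕ) = 0 then (lam : ℂ) else 1) =
          (if (i : ℕ) = 0 then (lam : ℂ) else 1) := hcc i
      rw [hstar]
      ring
    have hd0 : ∀ i : Fin N, d i = 0 := by
      have hre : ∑ i : Fin N, Complex.normSq (d i) = 0 := by
        have := hquad
        push_cast at this
        exact_mod_cast this
      intro i
      have := (Finset.sum_eq_zero_iff_of_nonneg
        (fun j _ => Complex.normSq_nonneg (d j))).mp hre i (Finset.mem_univ i)
      exact Complex.normSq_eq_zero.mp this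
    refine ⟨f 0, ?_⟩
    funext j
    have key : ∀ j : Fin (N + 1), f j = f 0 * psiLam N lam j := by
      intro j
      induction j using Fin.induction with
      | zero => simp [psiLam]
      | succ i ih =>
        have hfi : f i.succ = c i * f i.castSucc := by
          have := hd0 i; rw [hdd] at this
          have h2 := sub_eq_zero.mp this
          exact h2
        have hsne : psiLam N lam i.succ = (lam : ℂ) := by
          simp [psiLam, Fin.succ_ne_zero]
        by_cases h : (i : ℕ) = 0
        · have hz : i.castSucc = 0 := by ext; simpa using h
          have hci : c i = (lam : ℂ) := by simp [hc, h]
          rw [hfi, hci, hz, hsne]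
          ring
        · have hz : i.castSucc ≠ 0 := by
            intro hh; exact h (by simpa using congrArg Fin.val hh)
          have hci : c i = 1 := by simp [hc, h]
          rw [hfi, hci, one_mul, ih, hsne]
          simp [psiLam, hz]
    simp only [Pi.smul_apply, smul_eq_mul]
    exact key j
  · have h0 : psiLam N lam (0 : Fin (N+1)) = 1 := by simp [psiLam]
    have hsum : ∑ j, ‖psiLam N lam j‖ ^ 2 = 1 + N * lam ^ 2 := by
      rw [Fin.sum_univ_succ]
      have h1 : ∀ i : Fin N, ‖psiLam N lam i.succ‖ ^ 2 = lam ^ 2 := by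
        intro i
        have : psiLam N lam i.succ = (lam : ℂ) := by
          simp [psiLam, Fin.succ_ne_zero]
        rw [this, Complex.norm_real, Real.norm_eq_abs, sq_abs]
      simp only [h0, h1, Finset.sum_const, Finset.card_univ, Fintype.card_fin,
        nsmul_eq_mul, norm_one]
      norm_num
    rw [h0, hsum]
    norm_num
  · have h1 : (0:ℝ) < 1 + N * lam ^ 2 := by positivity
    have h2 : 1 + N * lam ^ 2 ≤ (N:ℝ) + 1 := by
      have hl : lam ^ 2 ≤ 1 := by nlinarith
      have := mul_le_mul_of_nonneg_left hl (Nat.cast_nonneg (α := ℝ) N)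
      linarith
    exact one_div_le_one_div_of_le h1 h2
end
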